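/- arXiv:2511.19015 — 13 statements merged into one kernel-verified Lean document; each statement's English description precedes it below -/
import Mathlib

section
/- Let b > 0 and a, a' ∈ ℝ. Then for every Borel measurable set S ⊆ ℝ, Lap(a, b)(S) ≤ exp(|a − a'|/b) · Lap(a', b)(S). -/
open MeasureTheory

/-- `laplace a b` is the Laplace distribution on `ℝ` centered at `a` with scale `b`,
given by the density `x ↦ (1/(2b)) · exp(−|x−a|/b)` with respect to Lebesgue measure. -/
noncomputable def laplace (a b : ℝ) : Measure ℝ :=
  volume.withDensity fun x => ENNReal.ofReal ((1 / (2 * b)) * Real.exp (-|x - a| / b))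

/-- For `b > 0` and `a, a' ∈ ℝ`, for every Borel measurable `S ⊆ ℝ`,
`Lap(a,b)(S) ≤ exp(|a − a'|/b) · Lap(a',b)(S)`. -/
theorem laplace_shift_ratio (b a a' : ℝ) (hb : 0 < b) (S : Set ℝ) (hS : MeasurableSet S) :
    laplace a b S ≤ ENNReal.ofReal (Real.exp (|a - a'| / b)) * laplace a' b S := by
  rw [laplace, laplace, withDensity_apply _ hS, withDensity_apply _ hS,
    ← lintegral_const_mul' _ _ ENNReal.ofReal_ne_top]
  refine setLIntegral_mono' hS fun x _ => ?_
  rw [← ENNReal.ofReal_mul (Real.exp_nonneg _)]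
  apply ENNReal.ofReal_le_ofReal
  rw [mul_left_comm, ← Real.exp_add]
  apply mul_le_mul_of_nonneg_left _ (by positivity)
  apply Real.exp_le_exp.mpr
  have h := abs_sub_le x a a'
  rw [← add_div]
  gcongr
  linarith
end

section
/- (Laplace mechanism satisfies ε-DP.) Let X be a countable type, let Q be a real-valued function on datasets over X whose global sensitivity is at most Δ > 0, i.e., |Q(D) − Q(D + {r})| ≤ Δ for every dataset D and record r ∈ X, and let ε > 0. Then the mechanism M sending each dataset D to the measure Lap(Q(D), Δ/ε) satisfies ε-DP: for every pair of neighboring datasets D, D' and every Borel set S ⊆ ℝ, M(D)(S) ≤ exp(ε) · M(D')(S). -/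
open MeasureTheory

lemma laplace_ratio (a a' b : ℝ) (hb : 0 < b) (h : |a - a'| ≤ b * ε') (hε' : 0 ≤ ε')
    (S : Set ℝ) (hS : MeasurableSet S) :
    laplace a b S ≤ ENNReal.ofReal (Real.exp ε') * laplace a' b S := by
  rw [laplace, laplace, withDensity_apply _ hS, withDensity_apply _ hS,
    ← lintegral_const_mul' _ _ (by simp)]
  refine setLIntegral_mono_ae (by fun_prop) (Filter.Eventually.of_forall fun x _ => ?_)
  rw [← ENNReal.ofReal_mul (Real.exp_pos _).le]
  refine ENNReal.ofReal_le_ofReal ?_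
  rw [← mul_assoc, mul_comm (Real.exp ε'), mul_assoc]
  refine mul_le_mul_of_nonneg_left ?_ (by positivity)
  rw [← Real.exp_add]
  refine Real.exp_le_exp.mpr ?_
  have h1 : |x - a| ≥ |x - a'| - |a - a'| := by
    have := abs_sub_abs_le_abs_sub (x - a') (x - a)
    have h2 : (x - a') - (x - a) = a - a' := by ring
    rw [h2] at this
    linarith
  have : -|x - a| / b ≤ ε' + -|x - a'| / b := by
    rw [div_le_iff₀ hb] at *
    have : (ε' + -|x - a'| / b) * b = ε' * b + -|x - a'| := by field_simp
    rw [this]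
    nlinarith [abs_nonneg (x - a)]
  linarith

/-- The Laplace mechanism satisfies `ε`-DP: if `Q` has global sensitivity at most `Δ > 0`
(i.e. `|Q(D) − Q(D + {r})| ≤ Δ` for every dataset `D` and record `r`), then for every pair
of neighboring datasets `D, D'` (one obtained from the other by inserting a single record)
and every Borel set `S ⊆ ℝ`, `Lap(Q(D), Δ/ε)(S) ≤ exp(ε) · Lap(Q(D'), Δ/ε)(S)`. -/
theorem laplace_mechanism_dp {X : Type*} [Countable X]
    (Q : Multiset X → ℝ) (Δ ε : ℝ) (hΔ : 0 < Δ) (hε : 0 < ε)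
    (hsens : ∀ (D : Multiset X) (r : X), |Q D - Q (r ::ₘ D)| ≤ Δ)
    (D D' : Multiset X) (hnbr : ∃ r : X, D' = r ::ₘ D ∨ D = r ::ₘ D')
    (S : Set ℝ) (hS : MeasurableSet S) :
    laplace (Q D) (Δ / ε) S ≤ ENNReal.ofReal (Real.exp ε) * laplace (Q D') (Δ / ε) S := by
  have hb : 0 < Δ / ε := div_pos hΔ hε
  refine laplace_ratio _ _ _ hb ?_ hε.le S hS
  have hbe : Δ / ε * ε = Δ := div_mul_cancel₀ _ hε.ne'
  rw [hbe]
  obtain ⟨r, h | h⟩ := hnbr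
  · rw [h]; exact hsens D r
  · rw [h, abs_sub_comm]; exact hsens D' r
end

section
/- (Sequential composition for PrDP.) Let X be a countable type and let M₁, …, M_k be mechanisms from datasets over X to measurable spaces Ω₁, …, Ω_k, where each M_i satisfies E_i-PrDP for a privacy budget function E_i : X → ℝ with E_i(r) > 0. Then the mechanism M sending each dataset D to the product measure M₁(D) ⊗ M₂(D) ⊗ ⋯ ⊗ M_k(D) on Ω₁ × ⋯ × Ω_k (the M_i run with independent randomness) satisfies E'-PrDP with E'(r) = Σ_{i=1}^{k} E_i(r). -/
open MeasureTheory

/-- A mechanism `M` from datasets (finite multisets) over `X` to a measurable space `Ω`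
satisfies `E`-per-record differential privacy if for every dataset `D`, record `r`, and
measurable output set `S`, both `M(D + {r})(S) ≤ exp(E r) · M(D)(S)` and
`M(D)(S) ≤ exp(E r) · M(D + {r})(S)`. -/
def PrDP {X : Type*} {Ω : Type*} [MeasurableSpace Ω]
    (E : X → ℝ) (M : Multiset X → Measure Ω) : Prop :=
  ∀ (D : Multiset X) (r : X) (S : Set Ω), MeasurableSet S →
    M (r ::ₘ D) S ≤ ENNReal.ofReal (Real.exp (E r)) * M D S ∧
    M D S ≤ ENNReal.ofReal (Real.exp (E r)) * M (r ::ₘ D) S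

private lemma boundedBy_mono' {α : Type*} {m m' : Set α → ENNReal} (h : ∀ s, m s ≤ m' s) :
    OuterMeasure.boundedBy m ≤ OuterMeasure.boundedBy m' := by
  intro s
  rw [OuterMeasure.boundedBy_apply, OuterMeasure.boundedBy_apply]
  refine le_iInf₂ fun t ht => (iInf₂_le t ht).trans ?_
  exact ENNReal.tsum_le_tsum fun i => iSup_mono fun _ => h _

private lemma measure_pi_mono {ι : Type*} [Fintype ι] {α : ι → Type*}
    [∀ i, MeasurableSpace (α i)] {μ μ' : ∀ i, Measure (α i)} (h : ∀ i, μ i ≤ μ' i) :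
    Measure.pi μ ≤ Measure.pi μ' := by
  rw [Measure.le_iff]
  intro s hs
  rw [Measure.pi_def, Measure.pi_def, toMeasure_apply _ _ hs,
    toMeasure_apply _ _ hs]
  refine boundedBy_mono' (fun t => ?_) s
  exact Finset.prod_le_prod' fun i _ => (h i) _

private lemma measure_pi_smul {ι : Type*} [Fintype ι] {α : ι → Type*}
    [∀ i, MeasurableSpace (α i)] (c : ι → ENNReal) (hc : ∀ i, c i ≠ ⊤)
    (ν : ∀ i, Measure (α i)) [∀ i, IsProbabilityMeasure (ν i)] :
    Measure.pi (fun i => c i • ν i) = (∏ i, c i) • Measure.pi ν := by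
  haveI : ∀ i, IsFiniteMeasure (c i • ν i) := fun i =>
    ⟨by simp [lt_top_iff_ne_top, hc i]⟩
  haveI : ∀ i, SigmaFinite (c i • ν i) := fun i => inferInstance
  refine Measure.pi_eq fun s hs => ?_
  simp [Measure.pi_pi, Finset.prod_mul_distrib]

/-- Sequential composition for PrDP: if each mechanism `M i` satisfies `E i`-PrDP
(with `E i > 0`), then the mechanism sending `D` to the product measure
`M 0 D ⊗ ⋯ ⊗ M (k-1) D` (the mechanisms run with independent randomness) satisfies
`E'`-PrDP with `E' r = ∑ i, E i r`. -/
theorem prdp_sequential_composition {X : Type*} [Countable X] (k : ℕ)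
    (Ω : Fin k → Type*) [∀ i, MeasurableSpace (Ω i)]
    (E : Fin k → X → ℝ) (hE : ∀ i r, 0 < E i r)
    (M : ∀ i : Fin k, Multiset X → Measure (Ω i))
    (hM : ∀ i D, IsProbabilityMeasure (M i D))
    (hPrDP : ∀ i, PrDP (E i) (M i)) :
    PrDP (fun r => ∑ i, E i r) (fun D => Measure.pi fun i => M i D) := by
  intro D r S hS
  set c : Fin k → ENNReal := fun i => ENNReal.ofReal (Real.exp (E i r)) with hc
  have hcne : ∀ i, c i ≠ ⊤ := fun i => ENNReal.ofReal_ne_top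
  have hprod : ENNReal.ofReal (Real.exp (∑ i, E i r)) = ∏ i, c i := by
    rw [Real.exp_sum]
    exact ENNReal.ofReal_prod_of_nonneg fun i _ => (Real.exp_pos _).le
  haveI := fun i => hM i D
  haveI := fun i => hM i (r ::ₘ D)
  have h1 : ∀ i, M i (r ::ₘ D) ≤ c i • M i D := fun i => by
    rw [Measure.le_iff]
    intro s hs
    simpa [hc] using (hPrDP i D r s hs).1
  have h2 : ∀ i, M i D ≤ c i • M i (r ::ₘ D) := fun i => by
    rw [Measure.le_iff]
    intro s hs
    simpa [hc] using (hPrDP i D r s hs).2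
  constructor
  · calc Measure.pi (fun i => M i (r ::ₘ D)) S
        ≤ Measure.pi (fun i => c i • M i D) S := measure_pi_mono h1 S
      _ = (∏ i, c i) * Measure.pi (fun i => M i D) S := by
          rw [measure_pi_smul c hcne]; simp
      _ = ENNReal.ofReal (Real.exp (∑ i, E i r)) * Measure.pi (fun i => M i D) S := by
          rw [hprod]
  · calc Measure.pi (fun i => M i D) S
        ≤ Measure.pi (fun i => c i • M i (r ::ₘ D)) S := measure_pi_mono h2 S
      _ = (∏ i, c i) * Measure.pi (fun i => M i (r ::ₘ D)) S := by
          rw [measure_pi_smul c hcne]; simp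
      _ = ENNReal.ofReal (Real.exp (∑ i, E i r)) * Measure.pi (fun i => M i (r ::ₘ D)) S := by
          rw [hprod]
end

section
/- (Parallel composition for PrDP.) Let X be a countable type, let R₁, …, R_k ⊆ X be pairwise disjoint subsets, and let M₁, …, M_k be mechanisms from datasets over X to measurable spaces Ω₁, …, Ω_k, where each M_i satisfies E_i-PrDP for a privacy budget function E_i : X → ℝ with E_i(r) > 0. Then the mechanism M sending each dataset D to the product measure M₁(D|_{R₁}) ⊗ ⋯ ⊗ M_k(D|_{R_k}), where D|_{R_i} denotes the sub-multiset of records of D that belong to R_i, satisfies E'-PrDP with E'(r) = max{E₁(r), …, E_k(r)}. -/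
open MeasureTheory

section AuxPrDP
open Set

theorem my_pi_mono {ι : Type*} [Fintype ι] {α : ι → Type*} [∀ i, MeasurableSpace (α i)]
    {μ ν : ∀ i, Measure (α i)} [∀ i, SigmaFinite (μ i)]
    (h : ∀ i, μ i ≤ ν i) : Measure.pi μ ≤ Measure.pi ν := by
  have key : (Measure.pi μ).toOuterMeasure ≤ OuterMeasure.pi fun i => (ν i).toOuterMeasure := by
    rw [OuterMeasure.le_pi]
    intro s _
    calc (Measure.pi μ).toOuterMeasure (pi univ s) = ∏ i, μ i (s i) := Measure.pi_pi μ s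
      _ ≤ ∏ i, ν i (s i) := Finset.prod_le_prod' fun i _ => (h i) (s i)
  rw [Measure.le_iff]
  intro S hS
  calc Measure.pi μ S ≤ (OuterMeasure.pi fun i => (ν i).toOuterMeasure) S := key S
    _ = Measure.pi ν S := by rw [Measure.pi_def, toMeasure_apply _ _ hS]

theorem my_pi_update_smul {ι : Type*} [Fintype ι] [DecidableEq ι] {α : ι → Type*}
    [∀ i, MeasurableSpace (α i)] (ν : ∀ i, Measure (α i)) [∀ i, IsFiniteMeasure (ν i)]
    (i₀ : ι) (c : ENNReal) (hc : c ≠ ⊤) :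
    Measure.pi (Function.update ν i₀ (c • ν i₀)) = c • Measure.pi ν := by
  haveI : ∀ i, SigmaFinite ((Function.update ν i₀ (c • ν i₀)) i) := by
    intro i
    rcases eq_or_ne i i₀ with rfl | hi
    · rw [Function.update_self]
      have : IsFiniteMeasure (c • ν i) := by
        constructor
        simp [ENNReal.smul_def]
        exact ENNReal.mul_lt_top hc.lt_top (measure_lt_top _ _)
      infer_instance
    · rw [Function.update_of_ne hi]; infer_instance
  refine Measure.pi_eq fun s hs => ?_
  simp only [Measure.smul_apply, Measure.pi_pi, smul_eq_mul]
  rw [← Finset.mul_prod_erase Finset.univ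
      (fun i => (Function.update ν i₀ (c • ν i₀) i) (s i)) (Finset.mem_univ i₀),
    ← Finset.mul_prod_erase Finset.univ (fun i => ν i (s i)) (Finset.mem_univ i₀),
    Function.update_self, Measure.smul_apply, smul_eq_mul, mul_assoc]
  congr 2
  exact Finset.prod_congr rfl fun i hi => by
    rw [Function.update_of_ne (Finset.ne_of_mem_erase hi)]

theorem my_pi_le_smul_pi {ι : Type*} [Fintype ι] [DecidableEq ι] {α : ι → Type*}
    [∀ i, MeasurableSpace (α i)] (μ ν : ∀ i, Measure (α i))
    (hμ : ∀ i, IsProbabilityMeasure (μ i)) (hν : ∀ i, IsProbabilityMeasure (ν i))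
    (i₀ : ι) (c : ENNReal) (hc : c ≠ ⊤)
    (h0 : ∀ s, MeasurableSet s → μ i₀ s ≤ c * ν i₀ s)
    (h : ∀ i, i ≠ i₀ → μ i = ν i)
    (S : Set (∀ i, α i)) : Measure.pi μ S ≤ c * Measure.pi ν S := by
  haveI := hμ; haveI := hν
  have h1 : Measure.pi μ ≤ Measure.pi (Function.update ν i₀ (c • ν i₀)) := by
    apply my_pi_mono
    intro i
    rcases eq_or_ne i i₀ with rfl | hi
    · rw [Function.update_self, Measure.le_iff]
      intro s hs
      rw [Measure.smul_apply, smul_eq_mul]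
      exact h0 s hs
    · rw [Function.update_of_ne hi, h i hi]
  calc Measure.pi μ S ≤ Measure.pi (Function.update ν i₀ (c • ν i₀)) S := Measure.le_iff'.mp h1 S
    _ = c * Measure.pi ν S := by rw [my_pi_update_smul ν i₀ c hc, Measure.smul_apply, smul_eq_mul]

end AuxPrDP

/-- Parallel composition for PrDP: if `R 0, …, R (k-1) ⊆ X` are pairwise disjoint and each
mechanism `M i` satisfies `E i`-PrDP (with `E i > 0`), then the mechanism sending `D` to the
product measure `M 0 (D|_{R 0}) ⊗ ⋯ ⊗ M (k-1) (D|_{R (k-1)})`, where `D|_{R i}` is the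
sub-multiset of records of `D` belonging to `R i`, satisfies `E'`-PrDP with
`E' r = max_i E i r` (expressed as `⨆ i, E i r` over the nonempty finite index type). -/

theorem prdp_parallel_composition {X : Type*} [Countable X] (k : ℕ) (hk : 0 < k)
    (Ω : Fin k → Type*) [∀ i, MeasurableSpace (Ω i)]
    (R : Fin k → Set X) (hdisj : Pairwise (Function.onFun Disjoint R))
    (E : Fin k → X → ℝ) (hE : ∀ i r, 0 < E i r)
    (M : ∀ i : Fin k, Multiset X → Measure (Ω i))
    (hM : ∀ i D, IsProbabilityMeasure (M i D))
    (hPrDP : ∀ i, PrDP (E i) (M i)) :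
    PrDP (fun r => ⨆ i, E i r)
      (fun D => Measure.pi fun i =>
        M i (@Multiset.filter X (fun x => x ∈ R i) (Classical.decPred _) D)) := by
  intro D r S hS
  haveI : Nonempty (Fin k) := ⟨⟨0, hk⟩⟩
  have hbdd : BddAbove (Set.range fun i => E i r) := (Set.finite_range _).bddAbove
  have hsup_le : ∀ i : Fin k, E i r ≤ ⨆ j, E j r := fun i => le_ciSup hbdd i
  have hc_ge : ∀ i, ENNReal.ofReal (Real.exp (E i r))
      ≤ ENNReal.ofReal (Real.exp (⨆ j, E j r)) :=
    fun i => ENNReal.ofReal_le_ofReal (Real.exp_le_exp.mpr (hsup_le i))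
  have hc_one : (1 : ENNReal) ≤ ENNReal.ofReal (Real.exp (⨆ j, E j r)) := by
    rw [← ENNReal.ofReal_one]
    refine ENNReal.ofReal_le_ofReal ?_
    rw [← Real.exp_zero]
    exact Real.exp_le_exp.mpr ((hE ⟨0, hk⟩ r).le.trans (hsup_le ⟨0, hk⟩))
  by_cases hr : ∃ i₀, r ∈ R i₀
  · obtain ⟨i₀, hri₀⟩ := hr
    have hfpos : @Multiset.filter X (fun x => x ∈ R i₀) (Classical.decPred _) (r ::ₘ D)
        = r ::ₘ @Multiset.filter X (fun x => x ∈ R i₀) (Classical.decPred _) D :=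
      @Multiset.filter_cons_of_pos X (fun x => x ∈ R i₀) (Classical.decPred _) r D hri₀
    have hfneg : ∀ i, i ≠ i₀ →
        @Multiset.filter X (fun x => x ∈ R i) (Classical.decPred _) (r ::ₘ D)
        = @Multiset.filter X (fun x => x ∈ R i) (Classical.decPred _) D := fun i hi =>
      @Multiset.filter_cons_of_neg X (fun x => x ∈ R i) (Classical.decPred _) r D (fun h => Set.disjoint_left.mp (hdisj hi) h hri₀)
    constructor
    · refine my_pi_le_smul_pi _ _ (fun i => hM i _) (fun i => hM i _) i₀ _
        ENNReal.ofReal_ne_top (fun s hs => ?_) (fun i hi => by rw [hfneg i hi]) S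
      rw [hfpos]
      exact le_trans ((hPrDP i₀ _ r s hs).1) (mul_le_mul_left (hc_ge i₀) _)
    · refine my_pi_le_smul_pi _ _ (fun i => hM i _) (fun i => hM i _) i₀ _
        ENNReal.ofReal_ne_top (fun s hs => ?_) (fun i hi => by rw [hfneg i hi]) S
      rw [hfpos]
      exact le_trans ((hPrDP i₀ _ r s hs).2) (mul_le_mul_left (hc_ge i₀) _)
  · push_neg at hr
    have heq : (fun i => M i (@Multiset.filter X (fun x => x ∈ R i)
          (Classical.decPred _) (r ::ₘ D)))
        = fun i => M i (@Multiset.filter X (fun x => x ∈ R i) (Classical.decPred _) D) :=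
      funext fun i => by rw [@Multiset.filter_cons_of_neg X (fun x => x ∈ R i) (Classical.decPred _) r D (hr i)]
    simp only [heq]
    exact ⟨le_mul_of_one_le_left zero_le hc_one,
      le_mul_of_one_le_left zero_le hc_one⟩
end

section
/- (Sub-exponential concentration of Laplace sums.) Let n ≥ 1, b > 0, and let η₁, …, η_n be independent random variables each distributed as Lap(0, b) (i.e., distributed according to the product measure Lap(0,b)^{⊗n} on ℝ^n). Then for every t with 0 < t ≤ 2·√2·n·b, Pr[|η₁ + ⋯ + η_n| ≥ t] ≤ 2·exp(−t²/(8·n·b²)). -/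
open MeasureTheory

open Set Real
open scoped ENNReal

lemma exp_int_Ioi (c : ℝ) (hc : 0 < c) :
    ∫ x in Set.Ioi (0:ℝ), Real.exp (-(c * x)) = 1 / c := by
  have h := integral_comp_mul_left_Ioi (fun y => Real.exp (-y)) 0 hc
  simp only [mul_zero] at h
  rw [h, integral_exp_neg_Ioi_zero]
  simp [one_div]

lemma exp_eq_aux (b l x : ℝ) (hb : 0 < b) (hx : |x| = x) :
    Real.exp (l*x) * ((1/(2*b)) * Real.exp (-|x|/b))
      = (1/(2*b)) * Real.exp (-((1/b - l) * x)) := by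
  rw [hx, mul_left_comm, ← Real.exp_add]
  congr 2
  field_simp
  ring

lemma half_integrable (b l : ℝ) (hb : 0 < b) (hl : l * b < 1) :
    IntegrableOn (fun x => Real.exp (l*x) * ((1/(2*b)) * Real.exp (-|x|/b))) (Set.Ioi 0) := by
  have hc : 0 < 1/b - l := by
    rw [sub_pos, lt_div_iff₀ hb]; exact hl
  have h1 := (exp_neg_integrableOn_Ioi 0 hc).const_mul (1/(2*b))
  simp only [neg_mul] at h1
  refine (IntegrableOn.congr_fun h1 (fun x hx => ?_) measurableSet_Ioi)
  exact (exp_eq_aux b l x hb (abs_of_pos hx)).symm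

lemma half_integral (b l : ℝ) (hb : 0 < b) (hl : l * b < 1) :
    ∫ x in Set.Ioi (0:ℝ), Real.exp (l*x) * ((1/(2*b)) * Real.exp (-|x|/b))
      = 1 / (2*(1 - l*b)) := by
  have hc : 0 < 1/b - l := by
    rw [sub_pos, lt_div_iff₀ hb]; exact hl
  have heq : ∫ x in Set.Ioi (0:ℝ), Real.exp (l*x) * ((1/(2*b)) * Real.exp (-|x|/b))
      = ∫ x in Set.Ioi (0:ℝ), (1/(2*b)) * Real.exp (-((1/b - l) * x)) := by
    refine setIntegral_congr_fun measurableSet_Ioi (fun x hx => ?_)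
    exact exp_eq_aux b l x hb (abs_of_pos hx)
  rw [heq, MeasureTheory.integral_const_mul, exp_int_Ioi _ hc, div_mul_div_comm, one_mul]
  congr 1
  field_simp

lemma integrableOn_comp_neg_Iic {g : ℝ → ℝ}
    (hg : IntegrableOn (fun x => g (-x)) (Set.Ici (0:ℝ))) :
    IntegrableOn g (Set.Iic (0:ℝ)) := by
  have A : MeasurableEmbedding fun x : ℝ => -x :=
    (Homeomorph.neg ℝ).isClosedEmbedding.measurableEmbedding
  rw [IntegrableOn, ← Measure.map_neg_eq_self (volume : Measure ℝ),
    Measure.restrict_map A.measurable measurableSet_Iic, A.integrable_map_iff]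
  have : (fun x : ℝ => -x) ⁻¹' Set.Iic 0 = Set.Ici 0 := by
    rw [Set.neg_preimage, Set.neg_Iic, neg_zero]
  rw [this]
  exact hg

lemma laplace_exp_integrable (b l : ℝ) (hb : 0 < b) (hl : |l| * b < 1) :
    Integrable (fun x => Real.exp (l*x) * ((1/(2*b)) * Real.exp (-|x|/b))) := by
  have h1 : l * b < 1 := lt_of_le_of_lt (by nlinarith [le_abs_self l]) hl
  have h2 : (-l) * b < 1 := lt_of_le_of_lt (by nlinarith [neg_abs_le l]) hl
  have hIoi := half_integrable b l hb h1
  have hIci : IntegrableOn (fun x => Real.exp (-l*x) * ((1/(2*b)) * Real.exp (-|x|/b)))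
      (Set.Ici 0) := Iff.mpr integrableOn_Ici_iff_integrableOn_Ioi (half_integrable b (-l) hb h2)
  have hIic : IntegrableOn (fun x => Real.exp (l*x) * ((1/(2*b)) * Real.exp (-|x|/b)))
      (Set.Iic 0) := by
    apply integrableOn_comp_neg_Iic
    refine hIci.congr_fun (fun x _ => ?_) measurableSet_Ici
    simp [mul_comm, neg_mul, mul_neg]
  rw [← integrableOn_univ, ← Set.Iic_union_Ioi (a := (0:ℝ))]
  exact hIic.union hIoi

lemma laplace_exp_integral (b l : ℝ) (hb : 0 < b) (hl : |l| * b < 1) :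
    ∫ x, Real.exp (l*x) * ((1/(2*b)) * Real.exp (-|x|/b)) = 1 / (1 - l^2*b^2) := by
  have h1 : l * b < 1 := lt_of_le_of_lt (by nlinarith [le_abs_self l]) hl
  have h2 : (-l) * b < 1 := lt_of_le_of_lt (by nlinarith [neg_abs_le l]) hl
  have hIoi := half_integrable b l hb h1
  have hIic : IntegrableOn (fun x => Real.exp (l*x) * ((1/(2*b)) * Real.exp (-|x|/b)))
      (Set.Iic 0) := by
    apply integrableOn_comp_neg_Iic
    refine (Iff.mpr (integrableOn_Ici_iff_integrableOn_Ioi (f := fun x => Real.exp (-l*x) * ((1/(2*b)) * Real.exp (-|x|/b))))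
      (half_integrable b (-l) hb h2)).congr_fun (fun x _ => ?_) measurableSet_Ici
    simp [mul_comm, neg_mul, mul_neg]
  rw [← intervalIntegral.integral_Iic_add_Ioi hIic hIoi, half_integral b l hb h1]
  have hneg : ∫ x in Set.Iic (0:ℝ), Real.exp (l*x) * ((1/(2*b)) * Real.exp (-|x|/b))
      = 1 / (2*(1 - (-l)*b)) := by
    rw [show (fun x => Real.exp (l*x) * ((1/(2*b)) * Real.exp (-|x|/b)))
        = (fun x => Real.exp ((-l)*(-x)) * ((1/(2*b)) * Real.exp (-|(-x)|/b))) by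
      funext x; simp [neg_mul, mul_neg]]
    rw [integral_comp_neg_Iic 0 (fun x => Real.exp ((-l)*x) * ((1/(2*b)) * Real.exp (-|x|/b))),
      neg_zero, ← half_integral b (-l) hb h2]
  rw [hneg]
  have hA : 1 - l*b ≠ 0 := by nlinarith
  have hB : 1 + l*b ≠ 0 := by nlinarith [neg_abs_le l, le_abs_self l]
  have hC : 1 - l^2*b^2 ≠ 0 := by
    have h : (1 - l*b) * (1 + l*b) = 1 - l^2*b^2 := by ring
    rw [← h]; exact mul_ne_zero hA hB
  have hB' : 1 - -l*b ≠ 0 := by rw [neg_mul, sub_neg_eq_add]; exact hB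
  rw [div_add_div _ _ (mul_ne_zero two_ne_zero hB') (mul_ne_zero two_ne_zero hA),
    div_eq_div_iff (mul_ne_zero (mul_ne_zero two_ne_zero hB') (mul_ne_zero two_ne_zero hA)) hC]
  ring

lemma laplace_lintegral_exp (b l : ℝ) (hb : 0 < b) (hl : |l| * b < 1) :
    ∫⁻ x, ENNReal.ofReal (Real.exp (l * x)) ∂(laplace 0 b)
      = ENNReal.ofReal (1 / (1 - l^2 * b^2)) := by
  have hmeas : Measurable fun x : ℝ => ENNReal.ofReal ((1 / (2 * b)) * Real.exp (-|x - 0| / b)) := by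
    fun_prop
  rw [laplace, lintegral_withDensity_eq_lintegral_mul _ hmeas (by fun_prop)]
  have heq : ∀ x : ℝ, (ENNReal.ofReal ((1 / (2 * b)) * Real.exp (-|x - 0| / b))
      * ENNReal.ofReal (Real.exp (l * x)))
      = ENNReal.ofReal (Real.exp (l * x) * ((1 / (2 * b)) * Real.exp (-|x| / b))) := by
    intro x
    rw [← ENNReal.ofReal_mul (by positivity), sub_zero, mul_comm]
  simp only [Pi.mul_apply, heq]
  rw [← MeasureTheory.ofReal_integral_eq_lintegral_ofReal
      (laplace_exp_integrable b l hb hl)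
      (Filter.Eventually.of_forall fun x => by positivity),
    laplace_exp_integral b l hb hl]

lemma laplace_isProbability (b : ℝ) (hb : 0 < b) :
    IsProbabilityMeasure (laplace 0 b) := by
  constructor
  have h := laplace_lintegral_exp b 0 hb (by simpa using one_pos)
  simpa using h

lemma lintegral_pi_pow {μ : Measure ℝ} [SigmaFinite μ] {f : ℝ → ℝ≥0∞} (hf : Measurable f) :
    ∀ n : ℕ, ∫⁻ x : Fin n → ℝ, ∏ i, f (x i) ∂(Measure.pi fun _ => μ)
      = (∫⁻ x, f x ∂μ) ^ n := by
  intro n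
  induction n with
  | zero =>
    simp [lintegral_const, Measure.pi_univ]
  | succ n ih =>
    have mp := measurePreserving_piFinSuccAbove (fun _ : Fin (n+1) => μ) 0
    have hG : Measurable fun y : ℝ × (Fin n → ℝ) => f y.1 * ∏ i, f (y.2 i) := by
      apply Measurable.mul (hf.comp measurable_fst)
      exact Finset.measurable_prod _ fun i _ => hf.comp ((measurable_pi_apply i).comp measurable_snd)
    calc ∫⁻ x : Fin (n+1) → ℝ, ∏ i, f (x i) ∂(Measure.pi fun _ => μ)
        = ∫⁻ x : Fin (n+1) → ℝ,
            (fun y : ℝ × (Fin n → ℝ) => f y.1 * ∏ i, f (y.2 i))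
              (MeasurableEquiv.piFinSuccAbove (fun _ => ℝ) 0 x) ∂(Measure.pi fun _ => μ) := by
          apply lintegral_congr
          intro x
          simp [MeasurableEquiv.piFinSuccAbove, Fin.prod_univ_succ, Fin.zero_succAbove, Fin.tail]
      _ = ∫⁻ y : ℝ × (Fin n → ℝ), f y.1 * ∏ i, f (y.2 i)
            ∂(μ.prod (Measure.pi fun _ : Fin n => μ)) := mp.lintegral_comp hG
      _ = (∫⁻ x, f x ∂μ) * ∫⁻ y : Fin n → ℝ, ∏ i, f (y i) ∂(Measure.pi fun _ => μ) :=
          lintegral_prod_mul hf.aemeasurable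
            (Finset.measurable_prod _ fun i _ => hf.comp (measurable_pi_apply i)).aemeasurable
      _ = (∫⁻ x, f x ∂μ) ^ (n+1) := by rw [ih]; ring

lemma chernoff_side (n : ℕ) (b : ℝ) (hb : 0 < b) (t lam : ℝ) (hlam : 0 < lam)
    (hlb : lam * b < 1) (s : ℝ) (hs : s = 1 ∨ s = -1) :
    (Measure.pi fun _ : Fin n => laplace 0 b) {η : Fin n → ℝ | t ≤ s * ∑ i, η i}
      ≤ ENNReal.ofReal (Real.exp (-lam * t))
        * ENNReal.ofReal (1/(1 - lam^2*b^2)) ^ n := by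
  haveI : IsProbabilityMeasure (laplace 0 b) := laplace_isProbability b hb
  set ν := Measure.pi fun _ : Fin n => laplace 0 b with hν
  have habs : |s * lam| = lam := by
    rcases hs with rfl | rfl <;> simp [abs_of_pos hlam]
  have hl : |s * lam| * b < 1 := by rw [habs]; exact hlb
  have hsq : (s * lam)^2 = lam^2 := by
    rcases hs with rfl | rfl <;> ring
  have hsum : Measurable fun η : Fin n → ℝ => ∑ i, η i :=
    Finset.measurable_sum _ fun i _ => measurable_pi_apply i
  have hmeasg : Measurable fun η : Fin n → ℝ =>
      ENNReal.ofReal (Real.exp (lam * (s * ∑ i, η i - t))) :=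
    ENNReal.measurable_ofReal.comp (Real.measurable_exp.comp
      (((hsum.const_mul s).sub measurable_const).const_mul lam))
  have step1 : ν {η : Fin n → ℝ | t ≤ s * ∑ i, η i}
      ≤ ∫⁻ η, ENNReal.ofReal (Real.exp (lam * (s * ∑ i, η i - t))) ∂ν := by
    rw [← setLIntegral_one]
    refine le_trans (setLIntegral_mono hmeasg fun η hη => ?_)
      (setLIntegral_le_lintegral _ _)
    have hη' : t ≤ s * ∑ i, η i := hη
    rw [show (1 : ℝ≥0∞) = ENNReal.ofReal 1 by simp]
    exact ENNReal.ofReal_le_ofReal (Real.one_le_exp (by nlinarith))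
  refine step1.trans ?_
  have hpt : ∀ η : Fin n → ℝ, ENNReal.ofReal (Real.exp (lam * (s * ∑ i, η i - t)))
      = ENNReal.ofReal (Real.exp (-lam * t))
        * ∏ i, ENNReal.ofReal (Real.exp ((s * lam) * η i)) := by
    intro η
    have : Real.exp (lam * (s * ∑ i, η i - t))
        = Real.exp (-lam * t) * ∏ i, Real.exp ((s * lam) * η i) := by
      rw [← Real.exp_sum, ← Real.exp_add]
      congr 1
      rw [← Finset.mul_sum]
      ring
    rw [this, ENNReal.ofReal_mul (Real.exp_nonneg _),
      ENNReal.ofReal_prod_of_nonneg (fun i _ => Real.exp_nonneg _)]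
  simp only [hpt]
  rw [lintegral_const_mul' _ _ ENNReal.ofReal_ne_top]
  have hprod : ∫⁻ η : Fin n → ℝ, ∏ i, ENNReal.ofReal (Real.exp ((s * lam) * η i)) ∂ν
      = (∫⁻ x, ENNReal.ofReal (Real.exp ((s * lam) * x)) ∂(laplace 0 b)) ^ n :=
    lintegral_pi_pow (f := fun x => ENNReal.ofReal (Real.exp ((s * lam) * x)))
      (ENNReal.measurable_ofReal.comp (Real.measurable_exp.comp (measurable_id.const_mul _))) n
  rw [hprod, laplace_lintegral_exp b (s * lam) hb hl, hsq]

/-- Sub-exponential concentration of Laplace sums: if `η 0, …, η (n-1)` are independent,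
each distributed as `Lap(0,b)` (i.e. `η` is distributed according to the product measure
`Lap(0,b)^{⊗n}` on `ℝ^n`), then for every `t` with `0 < t ≤ 2·√2·n·b`,
`Pr[|η 0 + ⋯ + η (n-1)| ≥ t] ≤ 2·exp(−t²/(8·n·b²))`. -/
theorem laplace_sum_concentration (n : ℕ) (hn : 1 ≤ n) (b : ℝ) (hb : 0 < b)
    (t : ℝ) (ht : 0 < t) (ht2 : t ≤ 2 * Real.sqrt 2 * n * b) :
    (Measure.pi fun _ : Fin n => laplace 0 b) {η : Fin n → ℝ | t ≤ |∑ i, η i|} ≤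
      ENNReal.ofReal (2 * Real.exp (-t ^ 2 / (8 * n * b ^ 2))) := by
  have hn' : (0:ℝ) < n := by exact_mod_cast hn
  set lam : ℝ := t / (4 * n * b^2) with hlamdef
  have hlam : 0 < lam := div_pos ht (by positivity)
  have hsqrt2 : Real.sqrt 2 < 2 := by
    nlinarith [Real.sq_sqrt (show (0:ℝ) ≤ 2 by norm_num), Real.sqrt_nonneg 2]
  have hlamb : lam * b ≤ Real.sqrt 2 / 2 := by
    rw [hlamdef]
    rw [div_mul_eq_mul_div, div_le_div_iff₀ (by positivity) (by norm_num)]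
    nlinarith [Real.sqrt_nonneg 2]
  have hlb : lam * b < 1 := lt_of_le_of_lt hlamb (by nlinarith)
  set x : ℝ := lam^2 * b^2 with hxdef
  have hxpos : 0 < x := by positivity
  have hxhalf : x ≤ 1/2 := by
    have h2 : Real.sqrt 2 ^ 2 = 2 := Real.sq_sqrt (by norm_num)
    have : (lam * b)^2 ≤ (Real.sqrt 2 / 2)^2 := by
      apply pow_le_pow_left₀ (by positivity) hlamb
    nlinarith
  have h1mx : 0 < 1 - x := by linarith
  have hexp_bound : 1/(1 - x) ≤ Real.exp (2*x) := by
    have h1 : 1/(1-x) ≤ 1 + 2*x := by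
      rw [div_le_iff₀ h1mx]; nlinarith
    have h2 := Real.add_one_le_exp (2*x)
    linarith
  have hbound : ENNReal.ofReal (Real.exp (-lam * t))
      * ENNReal.ofReal (1/(1 - lam^2*b^2)) ^ n
      ≤ ENNReal.ofReal (2⁻¹ * (2 * Real.exp (-t ^ 2 / (8 * n * b ^ 2)))) := by
    calc ENNReal.ofReal (Real.exp (-lam * t)) * ENNReal.ofReal (1/(1 - lam^2*b^2)) ^ n
        ≤ ENNReal.ofReal (Real.exp (-lam * t)) * ENNReal.ofReal (Real.exp (2*x)) ^ n := by
          gcongr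
      _ = ENNReal.ofReal (Real.exp (-lam * t) * Real.exp (2*x) ^ n) := by
          rw [← ENNReal.ofReal_pow (Real.exp_nonneg _),
            ← ENNReal.ofReal_mul (Real.exp_nonneg _)]
      _ = ENNReal.ofReal (Real.exp (-lam * t + n * (2*x))) := by
          rw [Real.exp_add, Real.exp_nat_mul]
      _ = ENNReal.ofReal (2⁻¹ * (2 * Real.exp (-t ^ 2 / (8 * n * b ^ 2)))) := by
          rw [show (2:ℝ)⁻¹ * (2 * Real.exp (-t ^ 2 / (8 * n * b ^ 2)))
              = Real.exp (-t ^ 2 / (8 * n * b ^ 2)) by ring]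
          congr 1
          rw [hxdef, hlamdef]
          field_simp
          ring
  have hside : ∀ s : ℝ, s = 1 ∨ s = -1 →
      (Measure.pi fun _ : Fin n => laplace 0 b) {η : Fin n → ℝ | t ≤ s * ∑ i, η i}
        ≤ ENNReal.ofReal (2⁻¹ * (2 * Real.exp (-t ^ 2 / (8 * n * b ^ 2)))) :=
    fun s hs => (chernoff_side n b hb t lam hlam hlb s hs).trans hbound
  have hsubset : {η : Fin n → ℝ | t ≤ |∑ i, η i|}
      ⊆ {η : Fin n → ℝ | t ≤ 1 * ∑ i, η i} ∪ {η : Fin n → ℝ | t ≤ (-1) * ∑ i, η i} := by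
    intro η hη
    simp only [Set.mem_setOf_eq, Set.mem_union, one_mul, neg_one_mul]
    rcases abs_cases (∑ i, η i) with ⟨h, _⟩ | ⟨h, _⟩
    · left; rw [← h]; exact hη
    · right; rw [← h]; exact hη
  calc (Measure.pi fun _ : Fin n => laplace 0 b) {η : Fin n → ℝ | t ≤ |∑ i, η i|}
      ≤ (Measure.pi fun _ : Fin n => laplace 0 b) {η : Fin n → ℝ | t ≤ 1 * ∑ i, η i}
        + (Measure.pi fun _ : Fin n => laplace 0 b) {η : Fin n → ℝ | t ≤ (-1) * ∑ i, η i} :=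
        (measure_mono hsubset).trans (measure_union_le _ _)
    _ ≤ ENNReal.ofReal (2⁻¹ * (2 * Real.exp (-t ^ 2 / (8 * n * b ^ 2))))
        + ENNReal.ofReal (2⁻¹ * (2 * Real.exp (-t ^ 2 / (8 * n * b ^ 2)))) :=
        add_le_add (hside 1 (Or.inl rfl)) (hside (-1) (Or.inr rfl))
    _ = ENNReal.ofReal (2 * Real.exp (-t ^ 2 / (8 * n * b ^ 2))) := by
        rw [← ENNReal.ofReal_add (by positivity) (by positivity)]
        congr 1
        ring
end

section
/- (No early stop in privacy-specified domain partitioning.) Let ε̌ > 0, β ∈ (0, 1), L ∈ ℕ with L ≥ 1, and define thresholds T_i = ln(L/β)/(2^{i−1}·ε̌) for i = 1, …, L. Let c₁, …, c_L ≥ 0 be reals, η₁, …, η_L ∈ ℝ with |η_i| < T_i for all i, and let ε_min > 0 satisfy ε_min ≤ 2^L·ε̌ and the property that c_i = 0 for every i with 2^i·ε̌ < ε_min. Define ℓ as the least index i ∈ {1, …, L} with c_i + η_i ≥ T_i if such an index exists, and ℓ = L otherwise. Then 2^{ℓ−1}·ε̌ ≥ ε_min/2. -/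
/-- No early stop in privacy-specified domain partitioning (deterministic core of
Algorithm 1, PrDP Count): with thresholds `T i = ln(L/β)/(2^(i-1)·ε̌)`, counts `c i ≥ 0`,
noises `|η i| < T i`, and `ε_min > 0` such that `ε_min ≤ 2^L·ε̌` and `c i = 0` whenever
`2^i·ε̌ < ε_min`, if `ℓ` is the least index `i ∈ {1,…,L}` with `c i + η i ≥ T i` when such
an index exists and `ℓ = L` otherwise, then `2^(ℓ-1)·ε̌ ≥ ε_min/2`. -/
theorem prdp_count_no_early_stop
    (εcheck β : ℝ) (hεcheck : 0 < εcheck) (hβ : β ∈ Set.Ioo (0 : ℝ) 1)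
    (L : ℕ) (hL : 1 ≤ L)
    (T : ℕ → ℝ) (hT : ∀ i ∈ Finset.Icc 1 L, T i = Real.log (L / β) / (2 ^ (i - 1) * εcheck))
    (c η : ℕ → ℝ)
    (hc : ∀ i ∈ Finset.Icc 1 L, 0 ≤ c i)
    (hη : ∀ i ∈ Finset.Icc 1 L, |η i| < T i)
    (εmin : ℝ) (hεmin : 0 < εmin) (hεminU : εmin ≤ 2 ^ L * εcheck)
    (hzero : ∀ i ∈ Finset.Icc 1 L, 2 ^ i * εcheck < εmin → c i = 0)
    (ℓ : ℕ) (hℓmem : ℓ ∈ Finset.Icc 1 L)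
    (hℓ : (T ℓ ≤ c ℓ + η ℓ ∧ ∀ i ∈ Finset.Icc 1 L, i < ℓ → c i + η i < T i) ∨
          (ℓ = L ∧ ∀ i ∈ Finset.Icc 1 L, c i + η i < T i)) :
    εmin / 2 ≤ 2 ^ (ℓ - 1) * εcheck := by
  obtain ⟨hℓ1, hℓL⟩ := Finset.mem_Icc.mp hℓmem
  have hpow : (2 : ℝ) ^ ℓ = 2 * 2 ^ (ℓ - 1) := by
    conv_lhs => rw [show ℓ = (ℓ - 1) + 1 by omega]
    ring
  rcases hℓ with ⟨h1, _⟩ | ⟨rfl, _⟩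
  · by_contra h
    push_neg at h
    have hlt : 2 ^ ℓ * εcheck < εmin := by
      rw [hpow]; linarith
    have hc0 : c ℓ = 0 := hzero ℓ hℓmem hlt
    have := hη ℓ hℓmem
    rw [abs_lt] at this
    rw [hc0] at h1
    linarith
  · rw [hpow] at hεminU
    linarith
end

section
/- (Bound on the mass of discarded domains.) Let ε̌ > 0, β ∈ (0, 1), L ∈ ℕ with L ≥ 1, and define thresholds T_i = ln(L/β)/(2^{i−1}·ε̌) for i = 1, …, L. Let c₁, …, c_L ≥ 0 be reals, η₁, …, η_L ∈ ℝ with |η_i| < T_i for all i, and let ε_min > 0 satisfy ε_min ≤ 2^L·ε̌ and the property that c_i = 0 for every i with 2^i·ε̌ < ε_min. Define ℓ as the least index i ∈ {1, …, L} with c_i + η_i ≥ T_i if such an index exists, and ℓ = L otherwise. Then Σ_{i=1}^{ℓ−1} c_i ≤ 8·ln(L/β)/ε_min. -/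
lemma geom_half_sum (m N : ℕ) : ∑ i ∈ Finset.Icc m N, ((1:ℝ)/2) ^ i ≤ 2 * (1/2) ^ m := by
  have hIcc : Finset.Icc m N = Finset.Ico m (N+1) := by
    rw [← Finset.Ico_add_one_right_eq_Icc]
  rw [hIcc]
  rcases le_or_gt m (N+1) with h | h
  · rw [geom_sum_Ico (by norm_num : ((1:ℝ)/2) ≠ 1) h]
    have h1 : (0:ℝ) ≤ (1/2)^(N+1) := by positivity
    rw [div_le_iff_of_neg (by norm_num : ((1:ℝ)/2 - 1) < 0)]
    nlinarith [pow_pos (by norm_num : (0:ℝ) < 1/2) m]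
  · rw [Finset.Ico_eq_empty (by omega)]
    simp only [Finset.sum_empty]
    positivity


/-- Bound on the mass of discarded domains (deterministic core of Algorithm 1, PrDP Count):
with thresholds `T i = ln(L/β)/(2^(i-1)·ε̌)`, counts `c i ≥ 0`, noises `|η i| < T i`, and
`ε_min > 0` such that `ε_min ≤ 2^L·ε̌` and `c i = 0` whenever `2^i·ε̌ < ε_min`, if `ℓ` is the
least index `i ∈ {1,…,L}` with `c i + η i ≥ T i` when such an index exists and `ℓ = L`
otherwise, then `∑_{i=1}^{ℓ-1} c i ≤ 8·ln(L/β)/ε_min`. -/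
theorem prdp_count_discarded_mass
    (εcheck β : ℝ) (hεcheck : 0 < εcheck) (hβ : β ∈ Set.Ioo (0 : ℝ) 1)
    (L : ℕ) (hL : 1 ≤ L)
    (T : ℕ → ℝ) (hT : ∀ i ∈ Finset.Icc 1 L, T i = Real.log (L / β) / (2 ^ (i - 1) * εcheck))
    (c η : ℕ → ℝ)
    (hc : ∀ i ∈ Finset.Icc 1 L, 0 ≤ c i)
    (hη : ∀ i ∈ Finset.Icc 1 L, |η i| < T i)
    (εmin : ℝ) (hεmin : 0 < εmin) (hεminU : εmin ≤ 2 ^ L * εcheck)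
    (hzero : ∀ i ∈ Finset.Icc 1 L, 2 ^ i * εcheck < εmin → c i = 0)
    (ℓ : ℕ) (hℓmem : ℓ ∈ Finset.Icc 1 L)
    (hℓ : (T ℓ ≤ c ℓ + η ℓ ∧ ∀ i ∈ Finset.Icc 1 L, i < ℓ → c i + η i < T i) ∨
          (ℓ = L ∧ ∀ i ∈ Finset.Icc 1 L, c i + η i < T i)) :
    ∑ i ∈ Finset.Icc 1 (ℓ - 1), c i ≤ 8 * Real.log (L / β) / εmin := by
  obtain ⟨hβ0, hβ1⟩ := hβ
  set A := Real.log (L / β) with hA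
  have hA0 : 0 < A := by
    apply Real.log_pos
    rw [lt_div_iff₀ hβ0]
    have h1 : (1:ℝ) ≤ L := by exact_mod_cast hL
    nlinarith
  obtain ⟨hℓ1, hℓL⟩ := Finset.mem_Icc.mp hℓmem
  have hex : ∃ n, εmin ≤ 2 ^ n * εcheck := ⟨L, hεminU⟩
  set m := Nat.find hex with hm
  have hmspec : εmin ≤ 2 ^ m * εcheck := Nat.find_spec hex
  -- bound on c below ℓ
  have hlt : ∀ i ∈ Finset.Icc 1 L, i < ℓ → c i + η i < T i := by
    rcases hℓ with ⟨_, h⟩ | ⟨_, h⟩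
    · exact h
    · exact fun i hi _ => h i hi
  have key : ∀ i ∈ Finset.Icc 1 (ℓ - 1),
      c i ≤ (if m ≤ i then (4 * A / εcheck) * ((1:ℝ)/2) ^ i else 0) := by
    intro i hi
    obtain ⟨hi1, hi2⟩ := Finset.mem_Icc.mp hi
    have hiℓ : i < ℓ := by omega
    have hiL : i ∈ Finset.Icc 1 L := Finset.mem_Icc.mpr ⟨hi1, by omega⟩
    by_cases hcase : m ≤ i
    · rw [if_pos hcase]
      have h1 := hlt i hiL hiℓ
      have h2 := hη i hiL
      have h3 : c i < 2 * T i := by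
        have := neg_abs_le (η i)
        nlinarith [abs_nonneg (η i)]
      have hTi := hT i hiL
      have h2i : (2:ℝ) ^ (i - 1) = 2 ^ i / 2 := by
        rw [eq_div_iff (by norm_num)]
        rw [← pow_succ]
        congr 1
        omega
      have hpow : (0:ℝ) < 2 ^ i := by positivity
      rw [hTi, h2i] at h3
      have : ((1:ℝ)/2) ^ i = 1 / 2 ^ i := by
        rw [div_pow]; norm_num
      rw [this]
      calc c i ≤ 2 * (A / (2 ^ i / 2 * εcheck)) := le_of_lt h3
        _ = 4 * A / εcheck * (1 / 2 ^ i) := by field_simp; ring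
    · rw [if_neg hcase]
      have hi_lt_m : i < m := by omega
      have hnot := Nat.find_min hex hi_lt_m
      push_neg at hnot
      exact le_of_eq (hzero i hiL hnot)
  calc ∑ i ∈ Finset.Icc 1 (ℓ - 1), c i
      ≤ ∑ i ∈ Finset.Icc 1 (ℓ - 1), (if m ≤ i then (4 * A / εcheck) * ((1:ℝ)/2) ^ i else 0) :=
        Finset.sum_le_sum key
    _ = ∑ i ∈ (Finset.Icc 1 (ℓ - 1)).filter (fun i => m ≤ i),
          (4 * A / εcheck) * ((1:ℝ)/2) ^ i := (Finset.sum_filter _ _).symm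
    _ ≤ ∑ i ∈ Finset.Icc m (ℓ - 1), (4 * A / εcheck) * ((1:ℝ)/2) ^ i := by
        apply Finset.sum_le_sum_of_subset_of_nonneg
        · intro x hx
          obtain ⟨hx1, hx2⟩ := Finset.mem_filter.mp hx
          obtain ⟨hx3, hx4⟩ := Finset.mem_Icc.mp hx1
          exact Finset.mem_Icc.mpr ⟨hx2, hx4⟩
        · intro i _ _
          positivity
    _ = (4 * A / εcheck) * ∑ i ∈ Finset.Icc m (ℓ - 1), ((1:ℝ)/2) ^ i := by
        rw [Finset.mul_sum]
    _ ≤ (4 * A / εcheck) * (2 * (1/2) ^ m) := by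
        apply mul_le_mul_of_nonneg_left (geom_half_sum m (ℓ - 1))
        positivity
    _ = 8 * A / (2 ^ m * εcheck) := by
        have hpow : (0:ℝ) < 2 ^ m := by positivity
        rw [div_pow]
        field_simp
        ring
    _ ≤ 8 * A / εmin := by
        apply div_le_div_of_nonneg_left (by positivity) hεmin hmspec
end

section
/- (Deterministic error bound for the PrDP counting aggregate.) Let ε̌ > 0, β ∈ (0, 1), L ∈ ℕ with L ≥ 1, and define thresholds T_i = ln(L/β)/(2^{i−1}·ε̌) for i = 1, …, L. Let c₁, …, c_L ≥ 0 be reals, η₁, …, η_L ∈ ℝ with |η_i| < T_i for all i, and let ε_min > 0 satisfy ε_min ≤ 2^L·ε̌ and the property that c_i = 0 for every i with 2^i·ε̌ < ε_min. Define ℓ as the least index i ∈ {1, …, L} with c_i + η_i ≥ T_i if such an index exists, and ℓ = L otherwise. Then |Σ_{i=ℓ}^{L} (c_i + η_i) − Σ_{i=1}^{L} c_i| ≤ 12·ln(L/β)/ε_min. -/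
lemma geom_tail_le (a b : ℕ) :
    ∑ i ∈ Finset.Icc a b, ((2:ℝ)⁻¹) ^ i ≤ 2 * (2⁻¹) ^ a := by
  rcases le_or_gt a (b+1) with h | h
  · rw [← Finset.Ico_add_one_right_eq_Icc, geom_sum_Ico (by norm_num : (2:ℝ)⁻¹ ≠ 1) h]
    have h1 : (0:ℝ) ≤ (2⁻¹:ℝ) ^ (b+1) := by positivity
    rw [div_le_iff_of_neg (by norm_num : (2:ℝ)⁻¹ - 1 < 0)]
    nlinarith [pow_nonneg (by norm_num : (0:ℝ) ≤ (2:ℝ)⁻¹) (b+1),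
      pow_nonneg (by norm_num : (0:ℝ) ≤ (2:ℝ)⁻¹) a]
  · rw [Finset.Icc_eq_empty (by omega)]
    simp

/-- Deterministic error bound for the PrDP counting aggregate (Algorithm 1, PrDP Count):
with thresholds `T i = ln(L/β)/(2^(i-1)·ε̌)`, counts `c i ≥ 0`, noises `|η i| < T i`, and
`ε_min > 0` such that `ε_min ≤ 2^L·ε̌` and `c i = 0` whenever `2^i·ε̌ < ε_min`, if `ℓ` is the
least index `i ∈ {1,…,L}` with `c i + η i ≥ T i` when such an index exists and `ℓ = L`
otherwise, then `|∑_{i=ℓ}^{L} (c i + η i) − ∑_{i=1}^{L} c i| ≤ 12·ln(L/β)/ε_min`. -/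
theorem prdp_count_error_bound
    (εcheck β : ℝ) (hεcheck : 0 < εcheck) (hβ : β ∈ Set.Ioo (0 : ℝ) 1)
    (L : ℕ) (hL : 1 ≤ L)
    (T : ℕ → ℝ) (hT : ∀ i ∈ Finset.Icc 1 L, T i = Real.log (L / β) / (2 ^ (i - 1) * εcheck))
    (c η : ℕ → ℝ)
    (hc : ∀ i ∈ Finset.Icc 1 L, 0 ≤ c i)
    (hη : ∀ i ∈ Finset.Icc 1 L, |η i| < T i)
    (εmin : ℝ) (hεmin : 0 < εmin) (hεminU : εmin ≤ 2 ^ L * εcheck)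
    (hzero : ∀ i ∈ Finset.Icc 1 L, 2 ^ i * εcheck < εmin → c i = 0)
    (ℓ : ℕ) (hℓmem : ℓ ∈ Finset.Icc 1 L)
    (hℓ : (T ℓ ≤ c ℓ + η ℓ ∧ ∀ i ∈ Finset.Icc 1 L, i < ℓ → c i + η i < T i) ∨
          (ℓ = L ∧ ∀ i ∈ Finset.Icc 1 L, c i + η i < T i)) :
    |(∑ i ∈ Finset.Icc ℓ L, (c i + η i)) - ∑ i ∈ Finset.Icc 1 L, c i| ≤
      12 * Real.log (L / β) / εmin := by
  obtain ⟨hβ0, hβ1⟩ := hβ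
  set A := Real.log (↑L / β) with hAdef
  have hL1 : (1:ℝ) ≤ (L:ℝ) := by exact_mod_cast hL
  have hA : 0 < A := Real.log_pos (by
    rw [lt_div_iff₀ hβ0]; nlinarith)
  obtain ⟨hℓ1, hℓL⟩ := Finset.mem_Icc.mp hℓmem
  -- T formula with 2^i
  have hTval : ∀ i ∈ Finset.Icc 1 L, T i = (2 * A / εcheck) * (2⁻¹ : ℝ) ^ i := by
    intro i hi
    obtain ⟨hi1, hi2⟩ := Finset.mem_Icc.mp hi
    have h21 : (2:ℝ) ^ (i-1) * 2 = 2 ^ i := by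
      rw [← pow_succ]; congr 1; omega
    rw [hT i hi, inv_pow, ← h21]
    have h2i : (0:ℝ) < 2 ^ (i-1) := by positivity
    field_simp
  have hTpos : ∀ i ∈ Finset.Icc 1 L, 0 < T i := fun i hi =>
    lt_of_le_of_lt (abs_nonneg _) (hη i hi)
  -- εmin ≤ 2^ℓ εcheck
  have hℓε : εmin ≤ 2 ^ ℓ * εcheck := by
    rcases hℓ with ⟨h1, _⟩ | ⟨hEq, _⟩
    · by_contra h
      push_neg at h
      have hc0 := hzero ℓ hℓmem h
      rw [hc0, zero_add] at h1
      exact absurd (lt_of_abs_lt (hη ℓ hℓmem)) (not_lt.mpr h1)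
    · rw [hEq]; exact hεminU
  have hlt : ∀ i ∈ Finset.Icc 1 L, i < ℓ → c i + η i < T i := by
    rcases hℓ with ⟨_, h2⟩ | ⟨_, h2⟩
    · exact h2
    · exact fun i hi _ => h2 i hi
  -- split sums
  have hsplit : ∑ i ∈ Finset.Icc 1 L, c i
      = ∑ i ∈ Finset.Ico 1 ℓ, c i + ∑ i ∈ Finset.Icc ℓ L, c i := by
    rw [← Finset.Ico_add_one_right_eq_Icc ℓ L, ← Finset.Ico_add_one_right_eq_Icc 1 L,
      Finset.sum_Ico_consecutive _ hℓ1 (by omega)]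
  have hrw : (∑ i ∈ Finset.Icc ℓ L, (c i + η i)) - ∑ i ∈ Finset.Icc 1 L, c i
      = (∑ i ∈ Finset.Icc ℓ L, η i) - ∑ i ∈ Finset.Ico 1 ℓ, c i := by
    rw [Finset.sum_add_distrib, hsplit]; ring
  rw [hrw]
  have hsub : Finset.Icc ℓ L ⊆ Finset.Icc 1 L :=
    Finset.Icc_subset_Icc hℓ1 le_rfl
  have hsub2 : Finset.Ico 1 ℓ ⊆ Finset.Icc 1 L := by
    intro i hi
    obtain ⟨h1, h2⟩ := Finset.mem_Ico.mp hi
    exact Finset.mem_Icc.mpr ⟨h1, by omega⟩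
  -- bound 1
  have hB1 : |∑ i ∈ Finset.Icc ℓ L, η i| ≤ 4 * A / εmin := by
    calc |∑ i ∈ Finset.Icc ℓ L, η i| ≤ ∑ i ∈ Finset.Icc ℓ L, |η i| :=
          Finset.abs_sum_le_sum_abs _ _
      _ ≤ ∑ i ∈ Finset.Icc ℓ L, (2 * A / εcheck) * (2⁻¹:ℝ) ^ i := by
          apply Finset.sum_le_sum
          intro i hi
          rw [← hTval i (hsub hi)]
          exact (hη i (hsub hi)).le
      _ = (2 * A / εcheck) * ∑ i ∈ Finset.Icc ℓ L, (2⁻¹:ℝ) ^ i := by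
          rw [Finset.mul_sum]
      _ ≤ (2 * A / εcheck) * (2 * (2⁻¹:ℝ) ^ ℓ) := by
          apply mul_le_mul_of_nonneg_left (geom_tail_le ℓ L) (by positivity)
      _ = 4 * A / (2 ^ ℓ * εcheck) := by
          rw [inv_pow]; field_simp; ring
      _ ≤ 4 * A / εmin := by
          apply div_le_div_of_nonneg_left (by positivity) hεmin hℓε
  -- bound 2
  have hB2 : ∑ i ∈ Finset.Ico 1 ℓ, c i ≤ 8 * A / εmin := by
    set S := (Finset.Ico 1 ℓ).filter (fun i => εmin ≤ 2 ^ i * εcheck) with hS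
    have hSsub : S ⊆ Finset.Ico 1 ℓ := Finset.filter_subset _ _
    have heq : ∑ i ∈ Finset.Ico 1 ℓ, c i = ∑ i ∈ S, c i := by
      symm
      apply Finset.sum_subset hSsub
      intro i hi hni
      apply hzero i (hsub2 hi)
      by_contra h
      push_neg at h
      exact hni (Finset.mem_filter.mpr ⟨hi, h⟩)
    rw [heq]
    rcases S.eq_empty_or_nonempty with hE | hNE
    · rw [hE]; simp; positivity
    · set m := S.min' hNE with hm
      have hmS : m ∈ S := S.min'_mem hNE
      obtain ⟨hmIco, hmε⟩ := Finset.mem_filter.mp hmS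
      calc ∑ i ∈ S, c i ≤ ∑ i ∈ S, 2 * T i := by
            apply Finset.sum_le_sum
            intro i hi
            have hiI := hsub2 (hSsub hi)
            have hilt := (Finset.mem_Ico.mp (hSsub hi)).2
            have h1 := hlt i hiI hilt
            have h2 := abs_lt.mp (hη i hiI)
            nlinarith [h2.1]
        _ = (4 * A / εcheck) * ∑ i ∈ S, (2⁻¹:ℝ) ^ i := by
            rw [Finset.mul_sum]
            apply Finset.sum_congr rfl
            intro i hi
            rw [hTval i (hsub2 (hSsub hi))]; ring
        _ ≤ (4 * A / εcheck) * ∑ i ∈ Finset.Icc m (ℓ-1), (2⁻¹:ℝ) ^ i := by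
            apply mul_le_mul_of_nonneg_left _ (by positivity)
            apply Finset.sum_le_sum_of_subset_of_nonneg
            · intro i hi
              have h1 : m ≤ i := S.min'_le i hi
              have h2 := (Finset.mem_Ico.mp (hSsub hi)).2
              exact Finset.mem_Icc.mpr ⟨h1, by omega⟩
            · intros; positivity
        _ ≤ (4 * A / εcheck) * (2 * (2⁻¹:ℝ) ^ m) := by
            apply mul_le_mul_of_nonneg_left (geom_tail_le m (ℓ-1)) (by positivity)
        _ = 8 * A / (2 ^ m * εcheck) := by
            rw [inv_pow]; field_simp; ring
        _ ≤ 8 * A / εmin := by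
            apply div_le_div_of_nonneg_left (by positivity) hεmin hmε
  have hcnn : 0 ≤ ∑ i ∈ Finset.Ico 1 ℓ, c i :=
    Finset.sum_nonneg (fun i hi => hc i (hsub2 hi))
  calc |(∑ i ∈ Finset.Icc ℓ L, η i) - ∑ i ∈ Finset.Ico 1 ℓ, c i|
      ≤ |∑ i ∈ Finset.Icc ℓ L, η i| + |∑ i ∈ Finset.Ico 1 ℓ, c i| := abs_sub _ _
    _ ≤ 4 * A / εmin + 8 * A / εmin := by
        rw [abs_of_nonneg hcnn]; exact add_le_add hB1 hB2
    _ = 12 * A / εmin := by ring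
end

section
/- (Utility of Algorithm 1, PrDP Count.) Let X be a countable type, ε̌, ε̂ > 0 with ε̌ ≤ ε̂, let E : X → [ε̌, ε̂] be a privacy budget function, let D be a nonempty finite multiset over X, let ε_min = min{E(r) : r ∈ D}, let L = ⌈log₂(ε̂/ε̌)⌉ (with L ≥ 1), and for i = 1, …, L let c_i be the number of records r of D (counted with multiplicity) with E(r) ∈ (2^{i−1}·ε̌, 2^i·ε̌] for i ≥ 2, and with E(r) ∈ [ε̌, 2·ε̌] for i = 1. Let β ∈ (0,1), set T_i = ln(L/β)/(2^{i−1}·ε̌), and let η = (η₁, …, η_L) be distributed according to the product measure Lap(0, 1/(2^0·ε̌)) ⊗ ⋯ ⊗ Lap(0, 1/(2^{L−1}·ε̌)) on ℝ^L. Define ℓ(η) as the least index i with c_i + η_i ≥ T_i if one exists, and ℓ(η) = L otherwise; set ε_τ(η) = 2^{ℓ(η)−1}·ε̌ and Q̃(η) = Σ_{i=ℓ(η)}^{L} (c_i + η_i). Then with probability at least 1 − β over η: ε_τ(η) ≥ ε_min/2 and |Q̃(η) − |D|| ≤ 12·ln(L/β)/ε_min, where |D| = Σ_{i=1}^{L}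 c_i is the total number of records in D. -/
open MeasureTheory

instance laplace.instSigmaFinite (a b : ℝ) : SigmaFinite (laplace a b) := by
  unfold laplace; infer_instance

lemma prdp_half_int (b t : ℝ) (hb : 0 < b) :
    ∫ x in (0:ℝ)..t, (1 / (2 * b)) * Real.exp (-x / b) = 1/2 - (1/2) * Real.exp (-t/b) := by
  have h : ∀ x ∈ Set.uIcc (0:ℝ) t, HasDerivAt (fun x => -(1/2) * Real.exp (-x/b))
      ((1 / (2 * b)) * Real.exp (-x / b)) x := by
    intro x _
    have h1 : HasDerivAt (fun x : ℝ => -x/b) (-1/b) x := by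
      simpa using ((hasDerivAt_id x).neg.div_const b)
    have := (h1.exp).const_mul (-(1/2) : ℝ)
    convert this using 1
    any_goals rfl
    ring
  rw [intervalIntegral.integral_eq_sub_of_hasDerivAt h]
  · simp; ring
  · apply Continuous.intervalIntegrable; continuity

lemma prdp_half_int' (b t : ℝ) (hb : 0 < b) :
    ∫ x in (-t:ℝ)..0, (1 / (2 * b)) * Real.exp (x / b) = 1/2 - (1/2) * Real.exp (-t/b) := by
  have h : ∀ x ∈ Set.uIcc (-t:ℝ) 0, HasDerivAt (fun x => (1/2) * Real.exp (x/b))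
      ((1 / (2 * b)) * Real.exp (x / b)) x := by
    intro x _
    have h1 : HasDerivAt (fun x : ℝ => x/b) (1/b) x := by
      simpa using ((hasDerivAt_id x).div_const b)
    have := (h1.exp).const_mul ((1/2) : ℝ)
    convert this using 1
    any_goals rfl
    ring
  rw [intervalIntegral.integral_eq_sub_of_hasDerivAt h]
  · rw [neg_div]; simp
  · apply Continuous.intervalIntegrable; continuity

lemma prdp_laplace_Ioo (b t : ℝ) (hb : 0 < b) (ht : 0 ≤ t) :
    laplace 0 b (Set.Ioo (-t) t) = ENNReal.ofReal (1 - Real.exp (-t/b)) := by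
  have hmeas : MeasurableSet (Set.Ioo (-t) t) := measurableSet_Ioo
  rw [laplace, withDensity_apply _ hmeas]
  have hcont : Continuous fun x : ℝ => (1 / (2 * b)) * Real.exp (-|x - 0| / b) := by
    continuity
  have hint : IntegrableOn (fun x : ℝ => (1 / (2 * b)) * Real.exp (-|x - 0| / b))
      (Set.Ioo (-t) t) :=
    (hcont.continuousOn.integrableOn_Icc (a := -t) (b := t)).mono_set Set.Ioo_subset_Icc_self
  rw [← ofReal_integral_eq_lintegral_ofReal hint ?_]
  · congr 1
    have h0 : ∫ x in Set.Ioo (-t) t, (1 / (2 * b)) * Real.exp (-|x - 0| / b)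
        = ∫ x in (-t)..t, (1 / (2 * b)) * Real.exp (-|x| / b) := by
      rw [intervalIntegral.integral_of_le (by linarith), ← integral_Ioc_eq_integral_Ioo]
      simp
    rw [h0, ← intervalIntegral.integral_add_adjacent_intervals (b := 0) (c := t)
        (by apply Continuous.intervalIntegrable; continuity)
        (by apply Continuous.intervalIntegrable; continuity)]
    have e1 : ∫ x in (-t:ℝ)..0, (1 / (2 * b)) * Real.exp (-|x| / b)
        = ∫ x in (-t:ℝ)..0, (1 / (2 * b)) * Real.exp (x / b) := by
      apply intervalIntegral.integral_congr
      intro x hx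
      rw [Set.uIcc_of_le (by linarith)] at hx
      simp only [abs_of_nonpos hx.2]
      ring_nf
    have e2 : ∫ x in (0:ℝ)..t, (1 / (2 * b)) * Real.exp (-|x| / b)
        = ∫ x in (0:ℝ)..t, (1 / (2 * b)) * Real.exp (-x / b) := by
      apply intervalIntegral.integral_congr
      intro x hx
      rw [Set.uIcc_of_le (by linarith)] at hx
      simp only [abs_of_nonneg hx.1]
    rw [e1, e2, prdp_half_int b t hb, prdp_half_int' b t hb]
    ring
  · filter_upwards with x
    positivity

/-- Each value in `[ε̌, 2^L ε̌]` lies in exactly one dyadic domain. -/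
lemma prdp_exists_unique_dom (εcheck : ℝ) (hε : 0 < εcheck) (L : ℕ) (hL : 1 ≤ L)
    (v : ℝ) (h1 : εcheck ≤ v) (h2 : v ≤ 2 ^ L * εcheck) :
    ∃! i : Fin L, (if (i : ℕ) = 0 then v ∈ Set.Icc εcheck (2 * εcheck)
      else v ∈ Set.Ioc (2 ^ (i : ℕ) * εcheck) (2 ^ ((i : ℕ) + 1) * εcheck)) := by
  classical
  -- any index satisfying the property forces `v ≤ 2^(i+1) ε̌` and, if `i ≠ 0`, `2^i ε̌ < v`
  have hup : ∀ i : Fin L, (if (i : ℕ) = 0 then v ∈ Set.Icc εcheck (2 * εcheck)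
      else v ∈ Set.Ioc (2 ^ (i : ℕ) * εcheck) (2 ^ ((i : ℕ) + 1) * εcheck)) →
      v ≤ 2 ^ ((i : ℕ) + 1) * εcheck := by
    intro i hi
    by_cases h0 : (i : ℕ) = 0
    · rw [if_pos h0] at hi; rw [h0]; norm_num; linarith [hi.2]
    · rw [if_neg h0] at hi; exact hi.2
  have huniq : ∀ i k : Fin L,
      (if (i : ℕ) = 0 then v ∈ Set.Icc εcheck (2 * εcheck)
        else v ∈ Set.Ioc (2 ^ (i : ℕ) * εcheck) (2 ^ ((i : ℕ) + 1) * εcheck)) →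
      (if (k : ℕ) = 0 then v ∈ Set.Icc εcheck (2 * εcheck)
        else v ∈ Set.Ioc (2 ^ (k : ℕ) * εcheck) (2 ^ ((k : ℕ) + 1) * εcheck)) →
      (i : ℕ) < (k : ℕ) → False := by
    intro i k hi hk hik
    have hk0 : (k : ℕ) ≠ 0 := by omega
    rw [if_neg hk0] at hk
    have h1' : v ≤ 2 ^ ((i : ℕ) + 1) * εcheck := hup i hi
    have h2' : (2 : ℝ) ^ ((i : ℕ) + 1) ≤ 2 ^ (k : ℕ) := by
      apply pow_le_pow_right₀ (by norm_num); omega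
    nlinarith [hk.1]
  set P : ℕ → Prop := fun n => 2 ^ n * εcheck < v with hP
  have : DecidablePred P := Classical.decPred _
  set j : ℕ := Nat.findGreatest P (L - 1) with hj
  have hjle : j ≤ L - 1 := Nat.findGreatest_le _
  have hjL : j < L := by omega
  have hjup : v ≤ 2 ^ (j + 1) * εcheck := by
    by_cases h : j + 1 ≤ L - 1
    · have := Nat.findGreatest_is_greatest (P := P) (n := L - 1) (k := j + 1) (by omega) h
      simpa [hP, not_lt] using this
    · have hj1 : L ≤ j + 1 := by omega
      calc v ≤ 2 ^ L * εcheck := h2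
        _ ≤ 2 ^ (j + 1) * εcheck := by
            apply mul_le_mul_of_nonneg_right _ hε.le
            apply pow_le_pow_right₀ (by norm_num) hj1
  have hjmem : (if ((⟨j, hjL⟩ : Fin L) : ℕ) = 0 then v ∈ Set.Icc εcheck (2 * εcheck)
      else v ∈ Set.Ioc (2 ^ ((⟨j, hjL⟩ : Fin L) : ℕ) * εcheck)
        (2 ^ (((⟨j, hjL⟩ : Fin L) : ℕ) + 1) * εcheck)) := by
    show (if j = 0 then v ∈ Set.Icc εcheck (2 * εcheck)
      else v ∈ Set.Ioc (2 ^ j * εcheck) (2 ^ (j + 1) * εcheck))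
    by_cases h0 : j = 0
    · rw [if_pos h0]
      refine ⟨h1, ?_⟩
      have := hjup
      rw [h0] at this
      norm_num at this
      linarith
    · rw [if_neg h0]
      exact ⟨Nat.findGreatest_of_ne_zero hj.symm h0, hjup⟩
  refine ⟨⟨j, hjL⟩, hjmem, ?_⟩
  · intro k hk
    by_contra hne
    have hne' : (k : ℕ) ≠ j := fun h => hne (Fin.ext h)
    rcases lt_or_gt_of_ne hne' with h | h
    · exact absurd (huniq k ⟨j, hjL⟩ hk hjmem h) (by simp)
    · exact absurd (huniq ⟨j, hjL⟩ k hjmem hk h) (by simp)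

/-- Counting: if every element satisfies exactly one of the predicates, the filtered
cardinalities sum to the total cardinality. -/
lemma prdp_card_sum {X : Type*} {L : ℕ} (p : Fin L → X → Prop) [∀ i, DecidablePred (p i)]
    (D : Multiset X) (h : ∀ r ∈ D, ∃! i, p i r) :
    ∑ i, Multiset.countP (p i) D = Multiset.card D := by
  classical
  revert h
  induction D using Multiset.induction_on with
  | empty => simp
  | cons a s ih =>
    intro h
    have ih' := ih (fun r hr => h r (Multiset.mem_cons_of_mem hr))
    obtain ⟨i0, hi0, huniq⟩ := h a (Multiset.mem_cons_self a s)
    simp only [Multiset.countP_cons, Finset.sum_add_distrib, ih', Multiset.card_cons]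
    congr 1
    rw [Finset.sum_eq_single_of_mem i0 (Finset.mem_univ _)]
    · simp [hi0]
    · intro j _ hj
      simp only [ite_eq_right_iff]
      intro hpj
      exact absurd (huniq j hpj) hj

/-- Geometric tail bound over `Fin L`. -/
lemma prdp_geom_tail {L : ℕ} (a : Fin L) :
    ∑ i ∈ Finset.univ.filter (fun i : Fin L => a ≤ i), ((2:ℝ)⁻¹) ^ (i : ℕ)
      ≤ 2 * (2⁻¹ : ℝ) ^ (a : ℕ) := by
  classical
  have e0 : ∑ i ∈ Finset.univ.filter (fun i : Fin L => a ≤ i), ((2:ℝ)⁻¹) ^ (i : ℕ)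
      = ∑ n ∈ Finset.Ico (a : ℕ) L, ((2:ℝ)⁻¹) ^ n := by
    rw [Finset.sum_filter]
    simp only [Fin.le_def]
    rw [Fin.sum_univ_eq_sum_range (fun n => if (a : ℕ) ≤ n then ((2:ℝ)⁻¹) ^ n else 0)]
    · rw [← Finset.sum_filter]
      congr 1
      ext n
      simp only [Finset.mem_filter, Finset.mem_range, Finset.mem_Ico]
      omega
  rw [e0]
  rcases le_or_gt (a : ℕ) L with hle | hlt
  · rw [geom_sum_Ico (by norm_num) hle]
    have h1 : (0:ℝ) < (2:ℝ)⁻¹ ^ L := by positivity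
    rw [div_le_iff_of_neg (by norm_num)]
    ring_nf
    nlinarith
  · rw [Finset.Ico_eq_empty (by omega)]
    simp

/-- Utility of Algorithm 1 (PrDP Count). Domains are indexed by `i : Fin L` (0-based, so
index `i` corresponds to the paper's domain `i+1`): `c i` counts the records `r` of `D` with
`E r ∈ (2^i·ε̌, 2^(i+1)·ε̌]` (and `E r ∈ [ε̌, 2·ε̌]` for `i = 0`), the noise on domain `i` is
`Lap(0, 1/(2^i·ε̌))`, the threshold is `T i = ln(L/β)/(2^i·ε̌)`, `ℓ(η)` is the least index
whose noisy count passes its threshold (or the last index `L-1` if none does),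
`ε_τ(η) = 2^(ℓ(η))·ε̌` and `Q̃(η) = ∑_{i ≥ ℓ(η)} (c i + η i)`. With probability at least
`1 − β` over `η`, we have `ε_τ(η) ≥ ε_min/2` and `|Q̃(η) − |D|| ≤ 12·ln(L/β)/ε_min`. -/
theorem prdp_count_utility {X : Type*} [Countable X]
    (εcheck εhat : ℝ) (hεcheck : 0 < εcheck) (hεhat : εcheck ≤ εhat)
    (E : X → ℝ) (hE : ∀ r, E r ∈ Set.Icc εcheck εhat)
    (D : Multiset X) (hD : D ≠ 0)
    (εmin : ℝ) (hεmin1 : ∀ r ∈ D, εmin ≤ E r) (hεmin2 : ∃ r ∈ D, E r = εmin)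
    (L : ℕ) (hL : 1 ≤ L) (hLdef : (L : ℤ) = ⌈Real.logb 2 (εhat / εcheck)⌉)
    (c : Fin L → ℕ)
    (hc : ∀ i : Fin L, c i =
      Multiset.card (@Multiset.filter X
        (fun r => if (i : ℕ) = 0 then E r ∈ Set.Icc εcheck (2 * εcheck)
          else E r ∈ Set.Ioc (2 ^ (i : ℕ) * εcheck) (2 ^ ((i : ℕ) + 1) * εcheck))
        (Classical.decPred _) D))
    (β : ℝ) (hβ : β ∈ Set.Ioo (0 : ℝ) 1)
    (T : Fin L → ℝ) (hT : ∀ i, T i = Real.log (L / β) / (2 ^ (i : ℕ) * εcheck)) :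
    ENNReal.ofReal (1 - β) ≤
      (Measure.pi fun i : Fin L => laplace 0 (1 / (2 ^ (i : ℕ) * εcheck)))
        {η : Fin L → ℝ | ∃ ℓ : Fin L,
          ((T ℓ ≤ (c ℓ : ℝ) + η ℓ ∧ ∀ i, i < ℓ → (c i : ℝ) + η i < T i) ∨
            ((ℓ : ℕ) = L - 1 ∧ ∀ i, (c i : ℝ) + η i < T i)) ∧
          εmin / 2 ≤ 2 ^ (ℓ : ℕ) * εcheck ∧
          |(∑ i ∈ Finset.univ.filter (fun i => ℓ ≤ i), ((c i : ℝ) + η i)) -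
              (Multiset.card D : ℝ)| ≤ 12 * Real.log (L / β) / εmin} := by
  classical
  obtain ⟨hβ0, hβ1⟩ := hβ
  set K := Real.log ((L : ℝ) / β) with hKdef
  have hL1 : (1 : ℝ) ≤ (L : ℝ) := by exact_mod_cast hL
  have hLβ : 1 < (L : ℝ) / β := by rw [lt_div_iff₀ hβ0]; nlinarith
  have hK : 0 < K := Real.log_pos hLβ
  have hbpos : ∀ i : Fin L, (0 : ℝ) < 1 / (2 ^ (i : ℕ) * εcheck) := fun i => by positivity
  have hTpos : ∀ i : Fin L, 0 < T i := fun i => by rw [hT i]; positivity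
  -- εmin facts
  obtain ⟨r0, hr0D, hr0⟩ := hεmin2
  have hεm1 : εcheck ≤ εmin := hr0 ▸ (hE r0).1
  have hεm2 : εmin ≤ εhat := hr0 ▸ (hE r0).2
  have hεminpos : 0 < εmin := lt_of_lt_of_le hεcheck hεm1
  -- 2^L bound
  have h2L : εhat ≤ 2 ^ L * εcheck := by
    have hlogle : Real.logb 2 (εhat / εcheck) ≤ (L : ℝ) := by
      have := Int.le_ceil (Real.logb 2 (εhat / εcheck))
      rw [← hLdef] at this
      exact_mod_cast this
    have hx : 0 < εhat / εcheck := div_pos (lt_of_lt_of_le hεcheck hεhat) hεcheck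
    have h' := (Real.logb_le_iff_le_rpow (by norm_num) hx).mp hlogle
    rw [Real.rpow_natCast] at h'
    rw [div_le_iff₀ hεcheck] at h'
    linarith
  -- the index of the domain containing εmin
  obtain ⟨istar, histar, _⟩ := prdp_exists_unique_dom εcheck hεcheck L hL εmin hεm1
    (le_trans hεm2 h2L)
  have hA : εmin ≤ 2 ^ ((istar : ℕ) + 1) * εcheck := by
    by_cases h0 : (istar : ℕ) = 0
    · rw [if_pos h0] at histar
      rw [h0]; norm_num; linarith [histar.2]
    · rw [if_neg h0] at histar
      exact histar.2
  have hBlow : ∀ i : ℕ, i < (istar : ℕ) → 2 ^ (i + 1) * εcheck < εmin := by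
    intro i hi
    have h0 : (istar : ℕ) ≠ 0 := by omega
    rw [if_neg h0] at histar
    have : (2 : ℝ) ^ (i + 1) ≤ 2 ^ (istar : ℕ) := by
      apply pow_le_pow_right₀ (by norm_num); omega
    nlinarith [histar.1]
  have hczero : ∀ i : Fin L, (i : ℕ) < (istar : ℕ) → c i = 0 := by
    intro i hi
    rw [hc i, Multiset.card_eq_zero]
    apply (@Multiset.filter_eq_nil X _ (Classical.decPred _) D).mpr
    intro r hr
    have hEr : εmin ≤ E r := hεmin1 r hr
    by_cases h0 : (i : ℕ) = 0
    · rw [if_pos h0]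
      intro hmem
      have := hBlow 0 (by omega)
      norm_num at this
      linarith [hmem.2]
    · rw [if_neg h0]
      intro hmem
      have := hBlow (i : ℕ) hi
      linarith [hmem.2]
  -- total count
  have hcard : Multiset.card D = ∑ i, c i := by
    have hmemdom : ∀ r ∈ D, ∃! i : Fin L,
        (if (i : ℕ) = 0 then E r ∈ Set.Icc εcheck (2 * εcheck)
          else E r ∈ Set.Ioc (2 ^ (i : ℕ) * εcheck) (2 ^ ((i : ℕ) + 1) * εcheck)) :=
      fun r _ => prdp_exists_unique_dom εcheck hεcheck L hL (E r) (hE r).1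
        (le_trans (hE r).2 h2L)
    rw [← @prdp_card_sum X L
      (fun i r => if (i : ℕ) = 0 then E r ∈ Set.Icc εcheck (2 * εcheck)
        else E r ∈ Set.Ioc (2 ^ (i : ℕ) * εcheck) (2 ^ ((i : ℕ) + 1) * εcheck))
      (fun i => Classical.decPred _) D hmemdom]
    apply Finset.sum_congr rfl
    intro i _
    rw [hc i, Multiset.countP_eq_card_filter]
  -- the good event
  set G : Set (Fin L → ℝ) := Set.pi Set.univ (fun i : Fin L => Set.Ioo (-(T i)) (T i)) with hG
  have hsub : G ⊆ {η : Fin L → ℝ | ∃ ℓ : Fin L,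
      ((T ℓ ≤ (c ℓ : ℝ) + η ℓ ∧ ∀ i, i < ℓ → (c i : ℝ) + η i < T i) ∨
        ((ℓ : ℕ) = L - 1 ∧ ∀ i, (c i : ℝ) + η i < T i)) ∧
      εmin / 2 ≤ 2 ^ (ℓ : ℕ) * εcheck ∧
      |(∑ i ∈ Finset.univ.filter (fun i => ℓ ≤ i), ((c i : ℝ) + η i)) -
          (Multiset.card D : ℝ)| ≤ 12 * Real.log (L / β) / εmin} := by
    intro η hη
    have bnd : ∀ i, |η i| < T i := by
      intro i
      have := hη i (Set.mem_univ i)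
      exact abs_lt.mpr this
    -- define the stopping index
    have key : ∀ ℓ : Fin L,
        ((T ℓ ≤ (c ℓ : ℝ) + η ℓ ∧ ∀ i, i < ℓ → (c i : ℝ) + η i < T i) ∨
          ((ℓ : ℕ) = L - 1 ∧ ∀ i, (c i : ℝ) + η i < T i)) →
        (∀ i, i < ℓ → (c i : ℝ) + η i < T i) →
        εmin / 2 ≤ 2 ^ (ℓ : ℕ) * εcheck ∧
        |(∑ i ∈ Finset.univ.filter (fun i => ℓ ≤ i), ((c i : ℝ) + η i)) -
            (Multiset.card D : ℝ)| ≤ 12 * Real.log (L / β) / εmin := by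
      intro ℓ hdisj hmin
      have hige : (istar : ℕ) ≤ (ℓ : ℕ) := by
        rcases hdisj with ⟨hPℓ, _⟩ | ⟨hℓ, _⟩
        · by_contra hlt
          push_neg at hlt
          have hc0 : c ℓ = 0 := hczero ℓ hlt
          have := (abs_lt.mp (bnd ℓ)).2
          rw [hc0] at hPℓ
          push_cast at hPℓ
          linarith
        · omega
      constructor
      · have h2 : (2 : ℝ) ^ (istar : ℕ) ≤ 2 ^ (ℓ : ℕ) :=
          pow_le_pow_right₀ (by norm_num) hige
        have := hA
        rw [pow_succ] at this
        nlinarith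
      · -- the sum bound
        set S := Finset.univ.filter (fun i : Fin L => ℓ ≤ i) with hS
        set S' := Finset.univ.filter (fun i : Fin L => ¬ ℓ ≤ i) with hS'
        set F := Finset.univ.filter (fun i : Fin L => istar ≤ i) with hF
        have hcardR : (Multiset.card D : ℝ) = ∑ i, (c i : ℝ) := by
          rw [hcard]; push_cast; rfl
        have hsplit : ∑ i, (c i : ℝ) = ∑ i ∈ S, (c i : ℝ) + ∑ i ∈ S', (c i : ℝ) :=
          (Finset.sum_filter_add_sum_filter_not _ _ _).symm
        have e : (∑ i ∈ S, ((c i : ℝ) + η i)) - (Multiset.card D : ℝ)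
            = ∑ i ∈ S, η i - ∑ i ∈ S', (c i : ℝ) := by
          rw [hcardR, hsplit, Finset.sum_add_distrib]; ring
        rw [e]
        have hTnn : ∀ i ∈ Finset.univ \ F, (0:ℝ) ≤ T i := fun i _ => (hTpos i).le
        have hSF : S ⊆ F := by
          intro i hi
          simp only [hS, hF, Finset.mem_filter, Finset.mem_univ, true_and] at *
          exact le_trans (by exact hige) (by exact_mod_cast hi)
        have h1 : |∑ i ∈ S, η i| ≤ ∑ i ∈ F, T i := by
          calc |∑ i ∈ S, η i| ≤ ∑ i ∈ S, |η i| := Finset.abs_sum_le_sum_abs _ _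
            _ ≤ ∑ i ∈ S, T i := Finset.sum_le_sum (fun i _ => (bnd i).le)
            _ ≤ ∑ i ∈ F, T i := Finset.sum_le_sum_of_subset_of_nonneg hSF
                (fun i _ _ => (hTpos i).le)
        have h2 : ∑ i ∈ S', (c i : ℝ) ≤ 2 * ∑ i ∈ F, T i := by
          have e2 : ∑ i ∈ S', (c i : ℝ)
              = ∑ i ∈ S'.filter (fun i => istar ≤ i), (c i : ℝ) := by
            symm
            apply Finset.sum_subset (Finset.filter_subset _ _)
            intro i hiS' hi
            simp only [Finset.mem_filter] at hi
            have : ¬ istar ≤ i := fun h => hi ⟨hiS', h⟩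
            have : (i : ℕ) < (istar : ℕ) := by
              rw [Fin.le_def] at this; omega
            rw [hczero i this]; norm_num
          rw [e2]
          calc ∑ i ∈ S'.filter (fun i => istar ≤ i), (c i : ℝ)
              ≤ ∑ i ∈ S'.filter (fun i => istar ≤ i), 2 * T i := by
                apply Finset.sum_le_sum
                intro i hi
                simp only [hS', Finset.mem_filter, Finset.mem_univ, true_and] at hi
                have hiℓ : i < ℓ := by
                  rcases hi with ⟨h1', _⟩
                  exact lt_of_not_ge h1'
                have := hmin i hiℓ
                have := (abs_lt.mp (bnd i)).1
                linarith
            _ ≤ ∑ i ∈ F, 2 * T i := by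
                apply Finset.sum_le_sum_of_subset_of_nonneg
                · intro i hi
                  simp only [hS', hF, Finset.mem_filter, Finset.mem_univ, true_and] at *
                  exact hi.2
                · intro i _ _
                  have := hTpos i
                  linarith
            _ = 2 * ∑ i ∈ F, T i := by rw [Finset.mul_sum]
        have h3 : ∑ i ∈ F, T i ≤ 4 * K / εmin := by
          have e3 : ∑ i ∈ F, T i = (K / εcheck) * ∑ i ∈ F, ((2:ℝ)⁻¹) ^ (i : ℕ) := by
            rw [Finset.mul_sum]
            apply Finset.sum_congr rfl
            intro i _
            rw [hT i, inv_pow]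
            rw [div_eq_mul_inv, div_eq_mul_inv, mul_inv, mul_assoc]
            ring
          rw [e3]
          have hgeo := prdp_geom_tail (L := L) istar
          have hKε : 0 ≤ K / εcheck := by positivity
          calc (K / εcheck) * ∑ i ∈ F, ((2:ℝ)⁻¹) ^ (i : ℕ)
              ≤ (K / εcheck) * (2 * (2⁻¹:ℝ) ^ (istar : ℕ)) := by
                apply mul_le_mul_of_nonneg_left _ hKε
                exact hgeo
            _ ≤ 4 * K / εmin := by
                have hp : (0:ℝ) < 2 ^ (istar : ℕ) := by positivity
                have hA' : εmin ≤ 2 * (2 ^ (istar : ℕ) * εcheck) := by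
                  rw [pow_succ] at hA; nlinarith
                have h4 : (K / εcheck) * (2 * (2⁻¹:ℝ) ^ (istar : ℕ))
                    = 4 * K / (2 * (2 ^ (istar : ℕ) * εcheck)) := by
                  rw [inv_pow]
                  field_simp
                  ring
                rw [h4]
                exact div_le_div_of_nonneg_left (by positivity) hεminpos hA'
        calc |∑ i ∈ S, η i - ∑ i ∈ S', (c i : ℝ)|
            ≤ |∑ i ∈ S, η i| + ∑ i ∈ S', (c i : ℝ) := by
              have hnn : 0 ≤ ∑ i ∈ S', (c i : ℝ) :=
                Finset.sum_nonneg (fun i _ => by positivity)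
              calc |∑ i ∈ S, η i - ∑ i ∈ S', (c i : ℝ)|
                  ≤ |∑ i ∈ S, η i| + |∑ i ∈ S', (c i : ℝ)| := abs_sub _ _
                _ = |∑ i ∈ S, η i| + ∑ i ∈ S', (c i : ℝ) := by
                    rw [abs_of_nonneg hnn]
          _ ≤ ∑ i ∈ F, T i + 2 * ∑ i ∈ F, T i := by linarith
          _ = 3 * ∑ i ∈ F, T i := by ring
          _ ≤ 3 * (4 * K / εmin) := by linarith
          _ = 12 * K / εmin := by ring
    -- choose ℓ
    by_cases hex : (Finset.univ.filter (fun i : Fin L => T i ≤ (c i : ℝ) + η i)).Nonempty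
    · set ℓ := (Finset.univ.filter (fun i : Fin L => T i ≤ (c i : ℝ) + η i)).min' hex with hℓ
      have hPℓ : T ℓ ≤ (c ℓ : ℝ) + η ℓ := by
        have := Finset.min'_mem _ hex
        simp only [Finset.mem_filter] at this
        exact this.2
      have hmin : ∀ i, i < ℓ → (c i : ℝ) + η i < T i := by
        intro i hi
        by_contra hni
        push_neg at hni
        have : ℓ ≤ i := Finset.min'_le _ i (by simp [hni])
        exact absurd hi (not_lt.mpr this)
      exact ⟨ℓ, Or.inl ⟨hPℓ, hmin⟩, key ℓ (Or.inl ⟨hPℓ, hmin⟩) hmin⟩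
    · have hall : ∀ i, (c i : ℝ) + η i < T i := by
        intro i
        by_contra hni
        push_neg at hni
        exact hex ⟨i, by simp [hni]⟩
      refine ⟨⟨L - 1, by omega⟩, Or.inr ⟨by simp, hall⟩,
        key _ (Or.inr ⟨by simp, hall⟩) (fun i _ => hall i)⟩
  -- measure computation
  refine le_trans ?_ (measure_mono hsub)
  rw [hG, Measure.pi_pi]
  have heach : ∀ i : Fin L, laplace 0 (1 / (2 ^ (i : ℕ) * εcheck)) (Set.Ioo (-(T i)) (T i))
      = ENNReal.ofReal (1 - β / L) := by
    intro i
    rw [prdp_laplace_Ioo _ _ (hbpos i) (hTpos i).le]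
    congr 1
    have harg : -(T i) / (1 / (2 ^ (i : ℕ) * εcheck)) = -K := by
      rw [hT i]
      field_simp
    rw [harg, Real.exp_neg, hKdef, Real.exp_log (by positivity), inv_div]
  rw [Finset.prod_congr rfl (fun i _ => heach i), Finset.prod_const, Finset.card_univ,
    Fintype.card_fin, ← ENNReal.ofReal_pow (by
      have : β / (L : ℝ) ≤ β := by
        apply div_le_self hβ0.le hL1
      linarith)]
  apply ENNReal.ofReal_le_ofReal
  have hbern := one_add_mul_le_pow (a := -(β / (L : ℝ))) (by
    have hble : β / (L : ℝ) ≤ β := div_le_self hβ0.le hL1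
    linarith) L
  have hLne : (L : ℝ) ≠ 0 := by positivity
  have : 1 + (L : ℝ) * -(β / (L : ℝ)) = 1 - β := by field_simp; ring
  rw [this] at hbern
  calc (1 : ℝ) - β ≤ (1 + -(β / (L : ℝ))) ^ L := hbern
    _ = (1 - β / (L : ℝ)) ^ L := by ring_nf
end

section
/- (Privacy of Algorithm 1, PrDP Count.) Let X be a countable type, ε̌, ε̂ > 0 with ε̌ ≤ ε̂, let E : X → [ε̌, ε̂] be a privacy budget function, let L = ⌈log₂(ε̂/ε̌)⌉ (with L ≥ 1), and for a finite multiset D over X let c_i(D) be the number of records r of D (with multiplicity) with E(r) ∈ (2^{i−1}·ε̌, 2^i·ε̌] for i ≥ 2 and E(r) ∈ [ε̌, 2·ε̌] for i = 1. Define the mechanism P sending D to the product measure Lap(c₁(D), 1/(2^0·ε̌)) ⊗ ⋯ ⊗ Lap(c_L(D), 1/(2^{L−1}·ε̌)) on ℝ^L. Then P satisfies E-PrDP: for every finite multiset D, every r ∈ X, and every Borel set S ⊆ ℝ^L, P(D + {r})(S) ≤ exp(E(r))·P(D)(S) and P(D)(S) ≤ exp(E(r))·P(D + {r})(S). -/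
open MeasureTheory ENNReal

lemma laplace_sigmaFinite (a b : ℝ) : SigmaFinite (laplace a b) :=
  SigmaFinite.withDensity_of_ne_top' fun _ => ENNReal.ofReal_ne_top

lemma laplace_le_smul {a a' b t : ℝ} (hb : 0 < b) (h : |a' - a| ≤ t) :
    laplace a' b ≤ ENNReal.ofReal (Real.exp (t / b)) • laplace a b := by
  have hmeas : Measurable fun x : ℝ =>
      ENNReal.ofReal ((1 / (2 * b)) * Real.exp (-|x - a| / b)) := by
    fun_prop
  unfold laplace
  rw [← withDensity_smul _ hmeas]
  refine withDensity_mono (Filter.Eventually.of_forall fun x => ?_)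
  simp only [Pi.smul_apply, smul_eq_mul]
  rw [← ENNReal.ofReal_mul (Real.exp_nonneg _)]
  apply ENNReal.ofReal_le_ofReal
  rw [← mul_assoc, mul_comm (Real.exp (t / b)), mul_assoc]
  refine mul_le_mul_of_nonneg_left ?_ (by positivity)
  rw [← Real.exp_add]
  apply Real.exp_le_exp.2
  have h1 : |x - a| - |x - a'| ≤ |a' - a| := by
    have h2 := abs_sub_abs_le_abs_sub (x - a) (x - a')
    have h3 : x - a - (x - a') = a' - a := by ring
    rwa [h3] at h2
  calc -|x - a'| / b ≤ (t + -|x - a|) / b := by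
        gcongr
        linarith [h1.trans h]
    _ = t / b + -|x - a| / b := add_div _ _ _

lemma pi_mono' {ι : Type*} [Fintype ι] {α : ι → Type*} [∀ i, MeasurableSpace (α i)]
    {μ ν : ∀ i, Measure (α i)} (h : ∀ i, μ i ≤ ν i) :
    Measure.pi μ ≤ Measure.pi ν := by
  have hout : (OuterMeasure.pi fun i => (μ i).toOuterMeasure) ≤
      OuterMeasure.pi fun i => (ν i).toOuterMeasure := by
    refine OuterMeasure.le_pi.2 fun s _ => (OuterMeasure.pi_pi_le _ s).trans ?_
    exact Finset.prod_le_prod' fun i _ => Measure.le_iff'.1 (h i) _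
  refine Measure.le_iff.2 fun s hs => ?_
  rw [Measure.pi_def, Measure.pi_def, toMeasure_apply _ _ hs, toMeasure_apply _ _ hs]
  exact hout _

lemma pi_update_smul {ι : Type*} [Fintype ι] [DecidableEq ι] {α : ι → Type*}
    [∀ i, MeasurableSpace (α i)] (μ : ∀ i, Measure (α i)) [∀ i, SigmaFinite (μ i)]
    (i₀ : ι) (k : ℝ≥0∞) (hk : k ≠ ⊤) :
    Measure.pi (Function.update μ i₀ (k • μ i₀)) = k • Measure.pi μ := by
  haveI hsf : ∀ i, SigmaFinite (Function.update μ i₀ (k • μ i₀) i) := by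
    intro i
    rcases eq_or_ne i i₀ with rfl | hne
    · rw [Function.update_self]
      refine ⟨⟨⟨spanningSets (μ i), fun _ => trivial, fun n => ?_,
        iUnion_spanningSets (μ i)⟩⟩⟩
      rw [Measure.smul_apply, smul_eq_mul]
      exact ENNReal.mul_lt_top hk.lt_top (measure_spanningSets_lt_top (μ i) n)
    · rw [Function.update_of_ne hne]; infer_instance
  refine Measure.pi_eq (μ := Function.update μ i₀ (k • μ i₀)) fun s hs => ?_
  have hfun : (fun i => Function.update μ i₀ (k • μ i₀) i (s i)) =
      Function.update (fun i => μ i (s i)) i₀ ((k • μ i₀) (s i₀)) := by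
    ext i
    rcases eq_or_ne i i₀ with rfl | hne
    · simp
    · simp [Function.update_of_ne hne]
  rw [Measure.smul_apply, Measure.pi_pi, smul_eq_mul, hfun,
    Finset.prod_update_of_mem (Finset.mem_univ i₀),
    ← Finset.mul_prod_erase Finset.univ _ (Finset.mem_univ i₀),
    Measure.smul_apply, smul_eq_mul, mul_assoc, Finset.sdiff_singleton_eq_erase]

/-- Privacy of Algorithm 1 (PrDP Count). Domains are indexed by `i : Fin L` (0-based, so
index `i` corresponds to the paper's domain `i+1`): `c D i` counts the records `r` of `D`
(with multiplicity) with `E r ∈ (2^i·ε̌, 2^(i+1)·ε̌]` (and `E r ∈ [ε̌, 2·ε̌]` for `i = 0`).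
The mechanism `P` sends `D` to the product measure
`Lap(c D 0, 1/(2^0·ε̌)) ⊗ ⋯ ⊗ Lap(c D (L-1), 1/(2^(L-1)·ε̌))` on `ℝ^L`. Then `P` satisfies
`E`-PrDP: for every dataset `D`, record `r`, and Borel `S ⊆ ℝ^L`,
`P(D + {r})(S) ≤ exp(E r)·P(D)(S)` and `P(D)(S) ≤ exp(E r)·P(D + {r})(S)`. -/
theorem prdp_count_privacy {X : Type*} [Countable X]
    (εcheck εhat : ℝ) (hεcheck : 0 < εcheck) (hεhat : εcheck ≤ εhat)
    (E : X → ℝ) (hE : ∀ r, E r ∈ Set.Icc εcheck εhat)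
    (L : ℕ) (hL : 1 ≤ L) (hLdef : (L : ℤ) = ⌈Real.logb 2 (εhat / εcheck)⌉)
    (c : Multiset X → Fin L → ℕ)
    (hc : ∀ (D : Multiset X) (i : Fin L), c D i =
      Multiset.card (@Multiset.filter X
        (fun r => if (i : ℕ) = 0 then E r ∈ Set.Icc εcheck (2 * εcheck)
          else E r ∈ Set.Ioc (2 ^ (i : ℕ) * εcheck) (2 ^ ((i : ℕ) + 1) * εcheck))
        (Classical.decPred _) D))
    (P : Multiset X → Measure (Fin L → ℝ))
    (hP : ∀ D, P D = Measure.pi fun i : Fin L =>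
      laplace (c D i) (1 / (2 ^ (i : ℕ) * εcheck)))
    (D : Multiset X) (r : X) (S : Set (Fin L → ℝ)) (hS : MeasurableSet S) :
    P (r ::ₘ D) S ≤ ENNReal.ofReal (Real.exp (E r)) * P D S ∧
    P D S ≤ ENNReal.ofReal (Real.exp (E r)) * P (r ::ₘ D) S := by
  classical
  obtain ⟨hεr1, hεr2⟩ := hE r
  -- `εhat ≤ 2^L * εcheck`
  have h2L : εhat ≤ 2 ^ L * εcheck := by
    have hpos : 0 < εhat / εcheck := div_pos (lt_of_lt_of_le hεcheck hεhat) hεcheck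
    have h1 : Real.logb 2 (εhat / εcheck) ≤ (L : ℝ) := by
      have h2 := Int.le_ceil (Real.logb 2 (εhat / εcheck))
      rw [← hLdef] at h2
      exact_mod_cast h2
    have h3 := (Real.logb_le_iff_le_rpow (by norm_num) hpos).1 h1
    rw [Real.rpow_natCast] at h3
    rw [div_le_iff₀ hεcheck] at h3
    linarith
  have hwit : E r ≤ 2 ^ (L - 1 + 1) * εcheck := by
    have : L - 1 + 1 = L := by omega
    rw [this]
    exact hεr2.trans h2L
  -- the bucket index
  have hex : ∃ n, E r ≤ 2 ^ (n + 1) * εcheck := ⟨L - 1, hwit⟩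
  set n₀ := Nat.find hex with hn₀
  have hub : E r ≤ 2 ^ (n₀ + 1) * εcheck := Nat.find_spec hex
  have hn₀L : n₀ < L := lt_of_le_of_lt (Nat.find_le hwit) (show L - 1 < L by omega)
  set i₀ : Fin L := ⟨n₀, hn₀L⟩ with hi₀
  have hlb : 2 ^ n₀ * εcheck ≤ E r := by
    cases' Nat.eq_zero_or_pos n₀ with h0 h0
    · rw [h0]; simpa using hεr1
    · obtain ⟨m, hm⟩ : ∃ m, n₀ = m + 1 := ⟨n₀ - 1, by omega⟩
      have hmin := Nat.find_min hex (show m < n₀ by omega)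
      push_neg at hmin
      rw [hm]
      exact hmin.le
  have hlb' : n₀ ≠ 0 → 2 ^ n₀ * εcheck < E r := by
    intro h0
    obtain ⟨m, hm⟩ : ∃ m, n₀ = m + 1 := ⟨n₀ - 1, by omega⟩
    have hmin := Nat.find_min hex (show m < n₀ by omega)
    push_neg at hmin
    rw [hm]
    exact hmin
  -- bucket membership characterization
  have hpred : ∀ i : Fin L,
      (if (i : ℕ) = 0 then E r ∈ Set.Icc εcheck (2 * εcheck)
        else E r ∈ Set.Ioc (2 ^ (i : ℕ) * εcheck) (2 ^ ((i : ℕ) + 1) * εcheck)) ↔ i = i₀ := by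
    intro i
    constructor
    · intro h
      refine Fin.ext ?_
      show (i : ℕ) = n₀
      by_contra hne
      rcases lt_or_gt_of_ne hne with hlt | hgt
      · have hmin := Nat.find_min hex hlt
        push_neg at hmin
        split_ifs at h with h0
        · rw [h0] at hmin
          norm_num at hmin
          exact absurd h.2 (not_le.2 hmin)
        · exact absurd h.2 (not_le.2 hmin)
      · have hi0 : (i : ℕ) ≠ 0 := by omega
        rw [if_neg hi0] at h
        have hmono : (2 : ℝ) ^ (n₀ + 1) ≤ 2 ^ (i : ℕ) :=
          pow_le_pow_right₀ (by norm_num) hgt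
        have := mul_le_mul_of_nonneg_right hmono hεcheck.le
        linarith [h.1, hub]
    · rintro rfl
      show (if n₀ = 0 then E r ∈ Set.Icc εcheck (2 * εcheck)
        else E r ∈ Set.Ioc (2 ^ n₀ * εcheck) (2 ^ (n₀ + 1) * εcheck))
      split_ifs with h0
      · refine ⟨hεr1, ?_⟩
        rw [h0] at hub
        norm_num at hub
        exact hub
      · exact ⟨hlb' h0, hub⟩
  -- counts
  have hcc : ∀ i : Fin L, c (r ::ₘ D) i = c D i + if i = i₀ then 1 else 0 := by
    intro i
    set p : X → Prop := fun s => if (i : ℕ) = 0 then E s ∈ Set.Icc εcheck (2 * εcheck)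
      else E s ∈ Set.Ioc (2 ^ (i : ℕ) * εcheck) (2 ^ ((i : ℕ) + 1) * εcheck) with hp
    rw [hc, hc, @Multiset.filter_cons X p (Classical.decPred p) r D, Multiset.card_add]
    by_cases hi : i = i₀
    · have hpr : p r := (hpred i).2 hi
      rw [if_pos hpr, if_pos hi]
      simp only [Multiset.card_singleton]
      rw [add_comm]
    · have hpr : ¬ p r := fun h => hi ((hpred i).1 h)
      rw [if_neg hpr, if_neg hi]
      simp only [Multiset.card_zero, zero_add, add_zero]
      rfl
  set b : Fin L → ℝ := fun i => 1 / (2 ^ (i : ℕ) * εcheck) with hbdef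
  have hb : ∀ i : Fin L, 0 < b i := fun i => by positivity
  set μD : Fin L → Measure ℝ := fun i => laplace (c D i) (b i) with hμD
  set μD' : Fin L → Measure ℝ := fun i => laplace (c (r ::ₘ D) i) (b i) with hμD'
  haveI : ∀ i, SigmaFinite (μD i) := fun i => laplace_sigmaFinite _ _
  haveI : ∀ i, SigmaFinite (μD' i) := fun i => laplace_sigmaFinite _ _
  have hPD : P D S = Measure.pi μD S := by rw [hP]
  have hPD' : P (r ::ₘ D) S = Measure.pi μD' S := by rw [hP]
  have hcenter : ((c (r ::ₘ D) i₀ : ℝ)) = (c D i₀ : ℝ) + 1 := by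
    rw [hcc i₀, if_pos rfl]; push_cast; ring
  have hcent_ne : ∀ i : Fin L, i ≠ i₀ → μD' i = μD i := by
    intro i hi
    have h1 : c (r ::ₘ D) i = c D i := by rw [hcc i, if_neg hi]; exact Nat.add_zero _
    rw [hμD', hμD]
    simp only [h1]
  set k : ℝ≥0∞ := ENNReal.ofReal (Real.exp (1 / b i₀)) with hk
  have hkne : k ≠ ⊤ := ENNReal.ofReal_ne_top
  have hbeq : 1 / b i₀ = 2 ^ n₀ * εcheck := one_div_one_div _
  have hkle : k ≤ ENNReal.ofReal (Real.exp (E r)) := by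
    apply ENNReal.ofReal_le_ofReal
    apply Real.exp_le_exp.2
    rw [hbeq]
    exact hlb
  have habs1 : |((c (r ::ₘ D) i₀ : ℝ)) - (c D i₀ : ℝ)| ≤ 1 := by
    rw [hcenter]
    norm_num
  have habs2 : |((c D i₀ : ℝ)) - (c (r ::ₘ D) i₀ : ℝ)| ≤ 1 := by
    rw [hcenter]
    norm_num
  constructor
  · have step1 : Measure.pi μD' ≤ Measure.pi (Function.update μD i₀ (k • μD i₀)) := by
      apply pi_mono'
      intro i
      rcases eq_or_ne i i₀ with rfl | hne
      · rw [Function.update_self]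
        show laplace ((c (r ::ₘ D) i₀ : ℕ) : ℝ) (b i₀) ≤
          ENNReal.ofReal (Real.exp (1 / b i₀)) • laplace ((c D i₀ : ℕ) : ℝ) (b i₀)
        exact laplace_le_smul (hb i₀) habs1
      · rw [Function.update_of_ne hne, hcent_ne i hne]
    have step2 : Measure.pi (Function.update μD i₀ (k • μD i₀)) = k • Measure.pi μD :=
      pi_update_smul μD i₀ k hkne
    calc P (r ::ₘ D) S = Measure.pi μD' S := hPD'
      _ ≤ Measure.pi (Function.update μD i₀ (k • μD i₀)) S := Measure.le_iff'.1 step1 S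
      _ = k * Measure.pi μD S := by rw [step2, Measure.smul_apply, smul_eq_mul]
      _ ≤ ENNReal.ofReal (Real.exp (E r)) * P D S := by
          rw [hPD]; exact mul_le_mul_left hkle _
  · have step1 : Measure.pi μD ≤ Measure.pi (Function.update μD' i₀ (k • μD' i₀)) := by
      apply pi_mono'
      intro i
      rcases eq_or_ne i i₀ with rfl | hne
      · rw [Function.update_self]
        show laplace ((c D i₀ : ℕ) : ℝ) (b i₀) ≤
          ENNReal.ofReal (Real.exp (1 / b i₀)) • laplace ((c (r ::ₘ D) i₀ : ℕ) : ℝ) (b i₀)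
        exact laplace_le_smul (hb i₀) habs2
      · rw [Function.update_of_ne hne, hcent_ne i hne]
    have step2 : Measure.pi (Function.update μD' i₀ (k • μD' i₀)) = k • Measure.pi μD' :=
      pi_update_smul μD' i₀ k hkne
    calc P D S = Measure.pi μD S := hPD
      _ ≤ Measure.pi (Function.update μD' i₀ (k • μD' i₀)) S := Measure.le_iff'.1 step1 S
      _ = k * Measure.pi μD' S := by rw [step2, Measure.smul_apply, smul_eq_mul]
      _ ≤ ENNReal.ofReal (Real.exp (E r)) * P (r ::ₘ D) S := by
          rw [hPD']; exact mul_le_mul_left hkle _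
end

section
/- (Privacy of the PrLDP randomizer, Algorithm 3.) Let X be a countable type, ε̌, ε̂ > 0 with ε̌ ≤ ε̂, let E : X → [ε̌, ε̂] be a privacy budget function, and let L = ⌈log₂(ε̂/ε̌)⌉ (with L ≥ 1). For a record r ∈ X, let q_i(r) ∈ {0,1} be the indicator that E(r) ∈ (2^{i−1}·ε̌, 2^i·ε̌] for i ≥ 2 and that E(r) ∈ [ε̌, 2·ε̌] for i = 1, and define μ_r = Lap(q₁(r), 1/(2^0·ε̌)) ⊗ ⋯ ⊗ Lap(q_L(r), 1/(2^{L−1}·ε̌)) and μ_⊥ = Lap(0, 1/(2^0·ε̌)) ⊗ ⋯ ⊗ Lap(0, 1/(2^{L−1}·ε̌)), both product measures on ℝ^L. Then for every r ∈ X and every Borel set S ⊆ ℝ^L: exp(−E(r))·μ_⊥(S) ≤ μ_r(S) ≤ exp(E(r))·μ_⊥(S). -/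
open MeasureTheory

section AuxPrLDP
open Set ENNReal

lemma my_lintegral_pi_prod : ∀ {n : ℕ} (μ : Fin n → Measure ℝ) [∀ i, SigmaFinite (μ i)]
    (f : Fin n → ℝ → ℝ≥0∞), (∀ i, Measurable (f i)) →
    ∫⁻ x : Fin n → ℝ, ∏ i, f i (x i) ∂Measure.pi μ = ∏ i, ∫⁻ x, f i x ∂μ i := by
  intro n
  induction n with
  | zero => intro μ _ f hf; simp [Measure.pi_of_empty]
  | succ n ih =>
    intro μ _ f hf
    have hmeas : Measurable fun x : Fin (n + 1) → ℝ => ∏ i, f i (x i) :=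
      Finset.measurable_prod _ fun i _ => (hf i).comp (measurable_pi_apply i)
    calc ∫⁻ x : Fin (n + 1) → ℝ, ∏ i, f i (x i) ∂Measure.pi μ
        = ∫⁻ p : ℝ × (Fin n → ℝ), f 0 p.1 * ∏ i : Fin n, f i.succ (p.2 i)
            ∂((μ 0).prod (Measure.pi fun j => μ j.succ)) := by
          rw [← ((measurePreserving_piFinSuccAbove μ 0).symm).lintegral_comp hmeas]
          simp_rw [MeasurableEquiv.piFinSuccAbove_symm_apply, Fin.insertNthEquiv,
            Equiv.coe_fn_mk, Fin.insertNth_zero, Fin.prod_univ_succ, Fin.cons_zero,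
            Fin.cons_succ, Fin.zero_succAbove, cast_eq]
      _ = (∫⁻ x, f 0 x ∂μ 0) * ∏ i : Fin n, ∫⁻ x, f i.succ x ∂μ i.succ := by
          rw [lintegral_prod_mul (f := f 0) (g := fun y : Fin n → ℝ => ∏ i : Fin n, f i.succ (y i)) (hf 0).aemeasurable
            (Finset.measurable_prod _ fun i _ =>
              (hf i.succ).comp (measurable_pi_apply i)).aemeasurable,
            ih (fun j => μ j.succ) (fun j => f j.succ) (fun j => hf j.succ)]
      _ = ∏ i, ∫⁻ x, f i x ∂μ i := (Fin.prod_univ_succ fun i => ∫⁻ x, f i x ∂μ i).symm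

lemma my_pi_withDensity {n : ℕ} (f : Fin n → ℝ → ℝ≥0∞) (hf : ∀ i, Measurable (f i))
    [∀ i, SigmaFinite ((volume : Measure ℝ).withDensity (f i))] :
    Measure.pi (fun i => (volume : Measure ℝ).withDensity (f i)) =
      (Measure.pi fun _ : Fin n => (volume : Measure ℝ)).withDensity
        (fun x => ∏ i, f i (x i)) := by
  refine (Measure.pi_eq (μ := fun i => (volume : Measure ℝ).withDensity (f i))
    (μ' := (Measure.pi fun _ : Fin n => (volume : Measure ℝ)).withDensity
      (fun x => ∏ i, f i (x i))) fun s hs => ?_)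
  rw [withDensity_apply _ (MeasurableSet.univ_pi hs),
    ← lintegral_indicator (MeasurableSet.univ_pi hs)]
  have key : ∀ x : Fin n → ℝ, (Set.univ.pi s).indicator (fun x => ∏ i, f i (x i)) x
      = ∏ i, (s i).indicator (f i) (x i) := by
    intro x
    by_cases hx : x ∈ Set.univ.pi s
    · rw [indicator_of_mem hx]
      exact Finset.prod_congr rfl fun i _ =>
        (indicator_of_mem (hx i (mem_univ i)) _).symm
    · rw [indicator_of_notMem hx]
      rw [Set.mem_univ_pi] at hx
      push_neg at hx
      obtain ⟨i, hi⟩ := hx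
      exact (Finset.prod_eq_zero (Finset.mem_univ i) (indicator_of_notMem hi _)).symm
  simp_rw [key]
  rw [my_lintegral_pi_prod _ _ (fun i => (hf i).indicator (hs i))]
  exact Finset.prod_congr rfl fun i _ => by
    rw [lintegral_indicator (hs i), withDensity_apply _ (hs i)]

lemma lap_bounds {a bb : ℝ} (hbb : 0 < bb) (ha : 0 ≤ a) (x : ℝ) :
    Real.exp (-(a / bb)) * ((1 / (2 * bb)) * Real.exp (-|x - 0| / bb))
        ≤ (1 / (2 * bb)) * Real.exp (-|x - a| / bb) ∧
    (1 / (2 * bb)) * Real.exp (-|x - a| / bb)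
        ≤ Real.exp (a / bb) * ((1 / (2 * bb)) * Real.exp (-|x - 0| / bb)) := by
  have h1 : (0:ℝ) < 1 / (2 * bb) := by positivity
  have habs1 : |x - a| ≤ |x| + a := by
    calc |x - a| ≤ |x| + |a| := abs_sub x a
    _ = |x| + a := by rw [abs_of_nonneg ha]
  have habs2 : |x| - a ≤ |x - a| := by
    have h := abs_sub_abs_le_abs_sub x a
    rw [abs_of_nonneg ha] at h; exact h
  constructor
  · rw [sub_zero, mul_left_comm, ← Real.exp_add]
    refine mul_le_mul_of_nonneg_left (Real.exp_le_exp.2 ?_) h1.le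
    rw [show -(a / bb) + -|x| / bb = (-(a + |x|)) / bb by ring]
    gcongr
    linarith
  · rw [sub_zero, mul_left_comm, ← Real.exp_add]
    refine mul_le_mul_of_nonneg_left (Real.exp_le_exp.2 ?_) h1.le
    rw [show a / bb + -|x| / bb = (a - |x|) / bb by ring]
    gcongr
    linarith

/-- Privacy of the PrLDP randomizer (Algorithm 3). Domains are indexed by `i : Fin L`
(0-based, so index `i` corresponds to the paper's domain `i+1`): `q r i ∈ {0,1}` indicates
whether `E r ∈ (2^i·ε̌, 2^(i+1)·ε̌]` (with `E r ∈ [ε̌, 2·ε̌]` for `i = 0`). The randomizer's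
output distribution on input `r` is `μ_r = ⊗_i Lap(q r i, 1/(2^i·ε̌))`, and on the dummy
record `⊥` (which belongs to no domain) it is `μ_⊥ = ⊗_i Lap(0, 1/(2^i·ε̌))`. Then for
every record `r` and Borel `S ⊆ ℝ^L`, `exp(−E r)·μ_⊥(S) ≤ μ_r(S) ≤ exp(E r)·μ_⊥(S)`. -/
theorem prldp_randomizer_privacy {X : Type*} [Countable X]
    (εcheck εhat : ℝ) (hεcheck : 0 < εcheck) (hεhat : εcheck ≤ εhat)
    (E : X → ℝ) (hE : ∀ r, E r ∈ Set.Icc εcheck εhat)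
    (L : ℕ) (hL : 1 ≤ L) (hLdef : (L : ℤ) = ⌈Real.logb 2 (εhat / εcheck)⌉)
    (q : X → Fin L → ℝ)
    (hq1 : ∀ (r : X) (i : Fin L),
      (if (i : ℕ) = 0 then E r ∈ Set.Icc εcheck (2 * εcheck)
        else E r ∈ Set.Ioc (2 ^ (i : ℕ) * εcheck) (2 ^ ((i : ℕ) + 1) * εcheck)) →
      q r i = 1)
    (hq0 : ∀ (r : X) (i : Fin L),
      ¬(if (i : ℕ) = 0 then E r ∈ Set.Icc εcheck (2 * εcheck)
        else E r ∈ Set.Ioc (2 ^ (i : ℕ) * εcheck) (2 ^ ((i : ℕ) + 1) * εcheck)) →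
      q r i = 0)
    (r : X) (S : Set (Fin L → ℝ)) (hS : MeasurableSet S) :
    ENNReal.ofReal (Real.exp (-(E r))) *
        (Measure.pi fun i : Fin L => laplace 0 (1 / (2 ^ (i : ℕ) * εcheck))) S ≤
      (Measure.pi fun i : Fin L => laplace (q r i) (1 / (2 ^ (i : ℕ) * εcheck))) S ∧
    (Measure.pi fun i : Fin L => laplace (q r i) (1 / (2 ^ (i : ℕ) * εcheck))) S ≤
      ENNReal.ofReal (Real.exp (E r)) *
        (Measure.pi fun i : Fin L => laplace 0 (1 / (2 ^ (i : ℕ) * εcheck))) S := by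

  classical
  set b : Fin L → ℝ := fun i => 1 / (2 ^ (i : ℕ) * εcheck) with hbdef
  have hb : ∀ i, 0 < b i := fun i => by
    have : (0:ℝ) < 2 ^ (i : ℕ) * εcheck := by positivity
    simpa [hbdef] using one_div_pos.2 this
  set d : ℝ → Fin L → ℝ → ℝ := fun a i x => (1 / (2 * b i)) * Real.exp (-|x - a| / b i)
    with hddef
  have hd0 : ∀ a i x, 0 ≤ d a i x := fun a i x => by
    have := (hb i); have := Real.exp_nonneg (-|x - a| / b i)
    simp only [hddef]; positivity
  have hdm : ∀ (a : ℝ) (i : Fin L), Measurable fun x : ℝ => ENNReal.ofReal (d a i x) := by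
    intro a i
    apply Measurable.ennreal_ofReal
    exact (Real.measurable_exp.comp
      (((measurable_id.sub measurable_const).abs.neg).div_const _)).const_mul _
  -- representation as density w.r.t. pi volume
  have hrepr : ∀ a : Fin L → ℝ,
      (Measure.pi fun i => laplace (a i) (b i)) S
        = ∫⁻ x in S, ENNReal.ofReal (∏ i, d (a i) i (x i))
            ∂(Measure.pi fun _ : Fin L => (volume : Measure ℝ)) := by
    intro a
    have hlap : (fun i : Fin L => laplace (a i) (b i))
        = fun i : Fin L => (volume : Measure ℝ).withDensity
            fun x => ENNReal.ofReal (d (a i) i x) := rfl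
    rw [hlap, my_pi_withDensity (fun i => fun x => ENNReal.ofReal (d (a i) i x))
        (fun i => hdm (a i) i), withDensity_apply _ hS]
    congr 1
    funext x
    exact (ENNReal.ofReal_prod_of_nonneg fun i _ => hd0 (a i) i (x i)).symm
  -- arithmetic about q
  set P : Fin L → Prop := fun i =>
    if (i : ℕ) = 0 then E r ∈ Set.Icc εcheck (2 * εcheck)
      else E r ∈ Set.Ioc (2 ^ (i : ℕ) * εcheck) (2 ^ ((i : ℕ) + 1) * εcheck) with hPdef
  have key : ∀ i j : Fin L, (i : ℕ) < (j : ℕ) → P i → P j → False := by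
    intro i j hij hi hj
    have hj0 : (j : ℕ) ≠ 0 := by omega
    rw [hPdef] at hi hj
    simp only [if_neg hj0] at hj
    have hupper : E r ≤ 2 ^ ((i : ℕ) + 1) * εcheck := by
      by_cases hi0 : (i : ℕ) = 0
      · simp only [if_pos hi0] at hi
        have := hi.2
        rw [hi0]; norm_num; linarith
      · simp only [if_neg hi0] at hi
        exact hi.2
    have hpow : (2:ℝ) ^ ((i : ℕ) + 1) ≤ 2 ^ (j : ℕ) :=
      pow_le_pow_right₀ (by norm_num) (by omega)
    have := mul_le_mul_of_nonneg_right hpow hεcheck.le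
    linarith [hj.1]
  have hq01 : ∀ i, q r i = 0 ∨ q r i = 1 := by
    intro i
    by_cases h : P i
    · exact Or.inr (hq1 r i h)
    · exact Or.inl (hq0 r i h)
  set c : Fin L → ℝ := fun i => q r i * (2 ^ (i : ℕ) * εcheck) with hcdef
  have hc0 : ∀ i, 0 ≤ c i := by
    intro i
    have : (0:ℝ) ≤ 2 ^ (i : ℕ) * εcheck := by positivity
    rcases hq01 i with h | h <;> simp [hcdef, h, this]
  have hcsum : ∑ i, c i ≤ E r := by
    by_cases hall : ∀ i, q r i = 0
    · have hz : ∑ i, c i = 0 := Finset.sum_eq_zero fun i _ => by simp [hcdef, hall i]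
      rw [hz]; linarith [(hE r).1]
    · push_neg at hall
      obtain ⟨i₀, hi₀⟩ := hall
      have hPi₀ : P i₀ := by by_contra h; exact hi₀ (hq0 r i₀ h)
      have hqi₀ : q r i₀ = 1 := hq1 r i₀ hPi₀
      have hz : ∀ j ∈ Finset.univ, j ≠ i₀ → c j = 0 := by
        intro j _ hne
        have hPj : ¬ P j := by
          intro hPj
          rcases Nat.lt_trichotomy (j : ℕ) (i₀ : ℕ) with h | h | h
          · exact key j i₀ h hPj hPi₀
          · exact hne (Fin.ext h)
          · exact key i₀ j h hPi₀ hPj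
        simp [hcdef, hq0 r j hPj]
      rw [Finset.sum_eq_single i₀ hz (fun h => absurd (Finset.mem_univ i₀) h)]
      have hle : 2 ^ (i₀ : ℕ) * εcheck ≤ E r := by
        by_cases hi0 : (i₀ : ℕ) = 0
        · rw [hPdef] at hPi₀; simp only [if_pos hi0] at hPi₀
          rw [hi0]; simpa using hPi₀.1
        · rw [hPdef] at hPi₀; simp only [if_neg hi0] at hPi₀
          exact hPi₀.1.le
      simpa [hcdef, hqi₀] using hle
  have hsum0 : (0:ℝ) ≤ ∑ i, c i := Finset.sum_nonneg fun i _ => hc0 i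
  -- per-factor bounds
  have hfac : ∀ (i : Fin L) (y : ℝ),
      Real.exp (-(c i)) * d 0 i y ≤ d (q r i) i y ∧
      d (q r i) i y ≤ Real.exp (c i) * d 0 i y := by
    intro i y
    have hci : c i = q r i / b i := by
      rw [hcdef, hbdef]
      field_simp
    have hqnn : 0 ≤ q r i := by rcases hq01 i with h | h <;> simp [h]
    have := lap_bounds (hb i) hqnn y
    rw [hci, hddef]
    exact this
  -- product bounds
  have hprod_low : ∀ x : Fin L → ℝ,
      Real.exp (-(E r)) * ∏ i, d 0 i (x i) ≤ ∏ i, d (q r i) i (x i) := by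
    intro x
    calc Real.exp (-(E r)) * ∏ i, d 0 i (x i)
        ≤ Real.exp (-(∑ i, c i)) * ∏ i, d 0 i (x i) := by
          apply mul_le_mul_of_nonneg_right (Real.exp_le_exp.2 (by linarith))
          exact Finset.prod_nonneg fun i _ => hd0 0 i (x i)
      _ = ∏ i, Real.exp (-(c i)) * d 0 i (x i) := by
          have h1 : (∏ i, Real.exp (-(c i)) * d 0 i (x i))
              = (∏ i, Real.exp (-(c i))) * ∏ i, d 0 i (x i) := Finset.prod_mul_distrib
          have h2 : (∏ i, Real.exp (-(c i))) = Real.exp (∑ i, -(c i)) :=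
            (Real.exp_sum _ _).symm
          have h3 : (∑ i, -(c i)) = -(∑ i, c i) := by simp
          rw [h1, h2, h3]
      _ ≤ ∏ i, d (q r i) i (x i) := by
          apply Finset.prod_le_prod
          · intro i _
            exact mul_nonneg (Real.exp_nonneg _) (hd0 0 i (x i))
          · intro i _
            exact (hfac i (x i)).1
  have hprod_hi : ∀ x : Fin L → ℝ,
      ∏ i, d (q r i) i (x i) ≤ Real.exp (E r) * ∏ i, d 0 i (x i) := by
    intro x
    calc ∏ i, d (q r i) i (x i)
        ≤ ∏ i, Real.exp (c i) * d 0 i (x i) := by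
          apply Finset.prod_le_prod
          · intro i _; exact hd0 (q r i) i (x i)
          · intro i _; exact (hfac i (x i)).2
      _ = Real.exp (∑ i, c i) * ∏ i, d 0 i (x i) := by
          have h1 : (∏ i, Real.exp (c i) * d 0 i (x i))
              = (∏ i, Real.exp (c i)) * ∏ i, d 0 i (x i) := Finset.prod_mul_distrib
          have h2 : (∏ i, Real.exp (c i)) = Real.exp (∑ i, c i) :=
            (Real.exp_sum _ _).symm
          rw [h1, h2]
      _ ≤ Real.exp (E r) * ∏ i, d 0 i (x i) := by
          apply mul_le_mul_of_nonneg_right (Real.exp_le_exp.2 hcsum)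
          exact Finset.prod_nonneg fun i _ => hd0 0 i (x i)
  have eqq := hrepr (q r)
  have eq0 := hrepr (fun _ => 0)
  rw [eqq, eq0]
  constructor
  · rw [← lintegral_const_mul' _ _ ENNReal.ofReal_ne_top]
    refine lintegral_mono fun x => ?_
    exact le_trans (le_of_eq (ENNReal.ofReal_mul (Real.exp_nonneg _)).symm)
      (ENNReal.ofReal_le_ofReal (hprod_low x))
  · rw [← lintegral_const_mul' _ _ ENNReal.ofReal_ne_top]
    refine lintegral_mono fun x => ?_
    exact le_trans (ENNReal.ofReal_le_ofReal (hprod_hi x))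
      (le_of_eq (ENNReal.ofReal_mul (Real.exp_nonneg _)))

end AuxPrLDP
end

section
/- (Deterministic error bound for PrLDP counting aggregation.) Let n ≥ 1, ε̌ > 0, β ∈ (0, 1), L ∈ ℕ with L ≥ 1, and define thresholds T_i = √(8·n)·ln(L/β)/(2^{i−1}·ε̌) for i = 1, …, L. Let c₁, …, c_L ≥ 0 be reals, H₁, …, H_L ∈ ℝ with |H_i| < T_i for all i, and let ε_min > 0 satisfy ε_min ≤ 2^L·ε̌ and the property that c_i = 0 for every i with 2^i·ε̌ < ε_min. Define ℓ as the least index i ∈ {1, …, L} with c_i + H_i ≥ T_i if such an index exists, and ℓ = L otherwise. Then 2^{ℓ−1}·ε̌ ≥ ε_min/2 and |Σ_{i=ℓ}^{L} (c_i + H_i) − Σ_{i=1}^{L} c_i| ≤ 12·√(8·n)·ln(L/β)/ε_min. -/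
lemma geom_tail_aux (a b : ℕ) : ∑ i ∈ Finset.Icc a b, ((1:ℝ)/2)^i ≤ 2 * (1/2)^a := by
  rw [← Finset.Ico_add_one_right_eq_Icc, Finset.sum_Ico_eq_sum_range]
  calc ∑ i ∈ Finset.range (b+1-a), ((1:ℝ)/2)^(a+i)
      = (1/2)^a * ∑ i ∈ Finset.range (b+1-a), ((1:ℝ)/2)^i := by
        rw [Finset.mul_sum]; exact Finset.sum_congr rfl (fun i _ => pow_add _ _ _)
    _ ≤ (1/2)^a * 2 := by
        exact mul_le_mul_of_nonneg_left (sum_geometric_two_le _) (by positivity)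
    _ = 2 * (1/2)^a := mul_comm _ _

/-- Deterministic error bound for PrLDP counting aggregation (Algorithms 3 and 4):
with `n ≥ 1` parties, thresholds `T i = √(8n)·ln(L/β)/(2^(i-1)·ε̌)`, counts `c i ≥ 0`,
aggregated noises `|H i| < T i`, and `ε_min > 0` such that `ε_min ≤ 2^L·ε̌` and `c i = 0`
whenever `2^i·ε̌ < ε_min`, if `ℓ` is the least index `i ∈ {1,…,L}` with `c i + H i ≥ T i`
when such an index exists and `ℓ = L` otherwise, then `2^(ℓ-1)·ε̌ ≥ ε_min/2` and
`|∑_{i=ℓ}^{L} (c i + H i) − ∑_{i=1}^{L} c i| ≤ 12·√(8n)·ln(L/β)/ε_min`. -/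
theorem prldp_count_error_bound
    (n : ℕ) (hn : 1 ≤ n)
    (εcheck β : ℝ) (hεcheck : 0 < εcheck) (hβ : β ∈ Set.Ioo (0 : ℝ) 1)
    (L : ℕ) (hL : 1 ≤ L)
    (T : ℕ → ℝ)
    (hT : ∀ i ∈ Finset.Icc 1 L,
      T i = Real.sqrt (8 * n) * Real.log (L / β) / (2 ^ (i - 1) * εcheck))
    (c H : ℕ → ℝ)
    (hc : ∀ i ∈ Finset.Icc 1 L, 0 ≤ c i)
    (hH : ∀ i ∈ Finset.Icc 1 L, |H i| < T i)
    (εmin : ℝ) (hεmin : 0 < εmin) (hεminU : εmin ≤ 2 ^ L * εcheck)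
    (hzero : ∀ i ∈ Finset.Icc 1 L, 2 ^ i * εcheck < εmin → c i = 0)
    (ℓ : ℕ) (hℓmem : ℓ ∈ Finset.Icc 1 L)
    (hℓ : (T ℓ ≤ c ℓ + H ℓ ∧ ∀ i ∈ Finset.Icc 1 L, i < ℓ → c i + H i < T i) ∨
          (ℓ = L ∧ ∀ i ∈ Finset.Icc 1 L, c i + H i < T i)) :
    εmin / 2 ≤ 2 ^ (ℓ - 1) * εcheck ∧
    |(∑ i ∈ Finset.Icc ℓ L, (c i + H i)) - ∑ i ∈ Finset.Icc 1 L, c i| ≤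
      12 * Real.sqrt (8 * n) * Real.log (L / β) / εmin := by
  classical
  obtain ⟨hℓ1, hℓL⟩ := Finset.mem_Icc.mp hℓmem
  set S : ℝ := Real.sqrt (8 * n) * Real.log (L / β) with hSdef
  have hS : 0 < S := by
    apply mul_pos
    · apply Real.sqrt_pos.mpr
      have : (1:ℝ) ≤ (n:ℝ) := by exact_mod_cast hn
      linarith
    · apply Real.log_pos
      rw [one_lt_div hβ.1]
      have : (1:ℝ) ≤ (L:ℝ) := by exact_mod_cast hL
      linarith [hβ.2]
  -- rewrite T pointwise in the nicer geometric form
  have hTform : ∀ i ∈ Finset.Icc 1 L, T i = (2 * S / εcheck) * (1/2)^i := by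
    intro i hi
    obtain ⟨hi1, _⟩ := Finset.mem_Icc.mp hi
    rw [hT i hi]
    have h2 : (2:ℝ)^(i-1) = 2^i / 2 := by
      rw [eq_div_iff (by norm_num)]
      rw [← pow_succ]
      congr 1
      omega
    have h3 : ((1:ℝ)/2)^i = 1 / 2^i := by
      rw [div_pow, one_pow]
    have hpow : (0:ℝ) < 2^i := by positivity
    rw [h2, h3]
    field_simp
  have hTpos : ∀ i ∈ Finset.Icc 1 L, 0 < T i := by
    intro i hi
    rw [hTform i hi]
    positivity
  -- Part 1
  have hpow2 : ∀ k : ℕ, 1 ≤ k → (2:ℝ)^k = 2 * 2^(k-1) := by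
    intro k hk
    rw [← pow_succ']
    congr 1
    omega
  have part1 : εmin / 2 ≤ 2 ^ (ℓ - 1) * εcheck := by
    rcases hℓ with ⟨hpass, _⟩ | ⟨hEq, _⟩
    · by_contra hcon
      push_neg at hcon
      have h2ℓ : (2:ℝ)^ℓ * εcheck < εmin := by
        rw [hpow2 ℓ hℓ1]; linarith
      have hc0 := hzero ℓ hℓmem h2ℓ
      have hHl := (abs_lt.mp (hH ℓ hℓmem)).2
      rw [hc0] at hpass
      linarith
    · subst hEq
      rw [hpow2 ℓ hℓ1] at hεminU
      linarith
  refine ⟨part1, ?_⟩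
  have hεminℓ : εmin ≤ 2^ℓ * εcheck := by
    rw [hpow2 ℓ hℓ1]; linarith
  -- split the sum of counts
  have hsplit : ∑ i ∈ Finset.Icc 1 L, c i
      = (∑ i ∈ Finset.Icc 1 (ℓ-1), c i) + ∑ i ∈ Finset.Icc ℓ L, c i := by
    have e1 : Finset.Icc 1 L = Finset.Ico 1 (L+1) := (Finset.Ico_add_one_right_eq_Icc 1 L).symm
    have e2 : Finset.Icc 1 (ℓ-1) = Finset.Ico 1 ℓ := by
      rw [← Finset.Ico_add_one_right_eq_Icc]; congr 1; omega
    have e3 : Finset.Icc ℓ L = Finset.Ico ℓ (L+1) := (Finset.Ico_add_one_right_eq_Icc ℓ L).symm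
    rw [e1, e2, e3, Finset.sum_Ico_consecutive c hℓ1 (by omega)]
  have hAB : (∑ i ∈ Finset.Icc ℓ L, (c i + H i)) - ∑ i ∈ Finset.Icc 1 L, c i
      = (∑ i ∈ Finset.Icc ℓ L, H i) - ∑ i ∈ Finset.Icc 1 (ℓ-1), c i := by
    rw [Finset.sum_add_distrib, hsplit]; ring
  -- bound the noise sum
  have hsub : Finset.Icc ℓ L ⊆ Finset.Icc 1 L := Finset.Icc_subset_Icc_left hℓ1
  have hB1 : ∑ i ∈ Finset.Icc ℓ L, |H i| ≤ 4 * S / εmin := by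
    calc ∑ i ∈ Finset.Icc ℓ L, |H i|
        ≤ ∑ i ∈ Finset.Icc ℓ L, (2 * S / εcheck) * (1/2)^i := by
          apply Finset.sum_le_sum
          intro i hi
          have := (hH i (hsub hi)).le
          rwa [hTform i (hsub hi)] at this
      _ = (2 * S / εcheck) * ∑ i ∈ Finset.Icc ℓ L, ((1:ℝ)/2)^i := by
          rw [Finset.mul_sum]
      _ ≤ (2 * S / εcheck) * (2 * (1/2)^ℓ) := by
          exact mul_le_mul_of_nonneg_left (geom_tail_aux ℓ L) (by positivity)
      _ = 4 * S / (2^ℓ * εcheck) := by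
          have h3 : ((1:ℝ)/2)^ℓ = 1 / 2^ℓ := by rw [div_pow, one_pow]
          have hpow : (0:ℝ) < 2^ℓ := by positivity
          rw [h3]; field_simp; ring
      _ ≤ 4 * S / εmin := by
          apply div_le_div_of_nonneg_left (by positivity) hεmin hεminℓ
  -- bound the count sum
  have hex : ∃ m : ℕ, εmin ≤ 2^m * εcheck := ⟨L, hεminU⟩
  set m := Nat.find hex with hmdef
  have hm : εmin ≤ 2^m * εcheck := Nat.find_spec hex
  have hkey : ∀ i ∈ Finset.Icc 1 (ℓ-1), c i + H i < T i := by
    intro i hi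
    obtain ⟨hi1, hi2⟩ := Finset.mem_Icc.mp hi
    have hiL : i ∈ Finset.Icc 1 L := Finset.mem_Icc.mpr ⟨hi1, by omega⟩
    rcases hℓ with ⟨_, h2⟩ | ⟨_, hall⟩
    · exact h2 i hiL (by omega)
    · exact hall i hiL
  have hB2 : ∑ i ∈ Finset.Icc 1 (ℓ-1), c i ≤ 8 * S / εmin := by
    have step : ∀ i ∈ Finset.Icc 1 (ℓ-1),
        c i ≤ if m ≤ i then (4 * S / εcheck) * (1/2)^i else 0 := by
      intro i hi
      obtain ⟨hi1, hi2⟩ := Finset.mem_Icc.mp hi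
      have hiL : i ∈ Finset.Icc 1 L := Finset.mem_Icc.mpr ⟨hi1, by omega⟩
      by_cases him : m ≤ i
      · simp only [him, if_true]
        have h1 := hkey i hi
        have h2 := (abs_lt.mp (hH i hiL)).1
        have h3 := hTform i hiL
        have : c i < 2 * T i := by linarith
        rw [h3] at this
        have heq : 4 * S / εcheck * (1/2)^i = 2 * (2 * S / εcheck * (1/2)^i) := by ring
        linarith [this]
      · simp only [him, if_false]
        apply le_of_eq
        apply hzero i hiL
        have hlt : i < m := by omega
        have := Nat.find_min hex hlt
        push_neg at this
        exact this
    calc ∑ i ∈ Finset.Icc 1 (ℓ-1), c i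
        ≤ ∑ i ∈ Finset.Icc 1 (ℓ-1),
            (if m ≤ i then (4 * S / εcheck) * (1/2)^i else 0) :=
          Finset.sum_le_sum step
      _ = ∑ i ∈ (Finset.Icc 1 (ℓ-1)).filter (fun i => m ≤ i),
            (4 * S / εcheck) * (1/2)^i := (Finset.sum_filter _ _).symm
      _ ≤ ∑ i ∈ Finset.Icc m (ℓ-1), (4 * S / εcheck) * (1/2)^i := by
          apply Finset.sum_le_sum_of_subset_of_nonneg
          · intro i hi
            simp only [Finset.mem_filter, Finset.mem_Icc] at hi ⊢
            omega
          · intro i _ _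
            positivity
      _ = (4 * S / εcheck) * ∑ i ∈ Finset.Icc m (ℓ-1), ((1:ℝ)/2)^i := by
          rw [Finset.mul_sum]
      _ ≤ (4 * S / εcheck) * (2 * (1/2)^m) := by
          exact mul_le_mul_of_nonneg_left (geom_tail_aux m (ℓ-1)) (by positivity)
      _ = 8 * S / (2^m * εcheck) := by
          have h3 : ((1:ℝ)/2)^m = 1 / 2^m := by rw [div_pow, one_pow]
          have hpow : (0:ℝ) < 2^m := by positivity
          rw [h3]; field_simp; ring
      _ ≤ 8 * S / εmin := by
          apply div_le_div_of_nonneg_left (by positivity) hεmin hm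
  -- combine
  rw [hAB]
  have hsum_nonneg : 0 ≤ ∑ i ∈ Finset.Icc 1 (ℓ-1), c i := by
    apply Finset.sum_nonneg
    intro i hi
    obtain ⟨hi1, hi2⟩ := Finset.mem_Icc.mp hi
    exact hc i (Finset.mem_Icc.mpr ⟨hi1, by omega⟩)
  have htri : |(∑ i ∈ Finset.Icc ℓ L, H i) - ∑ i ∈ Finset.Icc 1 (ℓ-1), c i|
      ≤ (∑ i ∈ Finset.Icc ℓ L, |H i|) + ∑ i ∈ Finset.Icc 1 (ℓ-1), c i := by
    calc |(∑ i ∈ Finset.Icc ℓ L, H i) - ∑ i ∈ Finset.Icc 1 (ℓ-1), c i|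
        ≤ |∑ i ∈ Finset.Icc ℓ L, H i| + |∑ i ∈ Finset.Icc 1 (ℓ-1), c i| :=
          abs_sub _ _
      _ ≤ (∑ i ∈ Finset.Icc ℓ L, |H i|) + ∑ i ∈ Finset.Icc 1 (ℓ-1), c i := by
          gcongr
          · exact Finset.abs_sum_le_sum_abs _ _
          · rw [abs_of_nonneg hsum_nonneg]
  have hfin : 12 * Real.sqrt (8 * n) * Real.log (L / β) / εmin = 12 * S / εmin := by
    rw [hSdef]; ring
  rw [hfin]
  have : 4 * S / εmin + 8 * S / εmin = 12 * S / εmin := by ring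
  linarith [htri, hB1, hB2]
end

section
/- (Deterministic error bound for the naive PrDP sum-estimation extension, Theorem A.1.) Let β ∈ (0, 1), L ∈ ℕ with L ≥ 1, let s₁, …, s_L > 0 be noise scales, and define thresholds T_i = s_i·ln(L/β) for i = 1, …, L. Let v₁, …, v_L ≥ 0 be reals (the per-domain sums) and η₁, …, η_L ∈ ℝ with |η_i| ≤ T_i for all i. Define ℓ as the least index i ∈ {1, …, L} with v_i + η_i ≥ T_i if such an index exists, and ℓ = L otherwise. Then |Σ_{i=ℓ}^{L} (v_i + η_i) − Σ_{i=1}^{L} v_i| ≤ Σ_{i < ℓ, v_i > 0} 2·s_i·ln(L/β) + Σ_{i=ℓ}^{L} s_i·ln(L/β). -/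
/-- Deterministic error bound for the naive PrDP sum-estimation extension (Theorem A.1):
with noise scales `s i > 0`, thresholds `T i = s i · ln(L/β)`, per-domain sums `v i ≥ 0`,
and noises `|η i| ≤ T i`, if `ℓ` is the least index `i ∈ {1,…,L}` with `v i + η i ≥ T i`
when such an index exists and `ℓ = L` otherwise, then
`|∑_{i=ℓ}^{L} (v i + η i) − ∑_{i=1}^{L} v i|
  ≤ ∑_{i < ℓ, v i > 0} 2·s i·ln(L/β) + ∑_{i=ℓ}^{L} s i·ln(L/β)`. -/
theorem prdp_sum_extension_error_bound
    (β : ℝ) (hβ : β ∈ Set.Ioo (0 : ℝ) 1)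
    (L : ℕ) (hL : 1 ≤ L)
    (s : ℕ → ℝ) (hs : ∀ i ∈ Finset.Icc 1 L, 0 < s i)
    (T : ℕ → ℝ) (hT : ∀ i ∈ Finset.Icc 1 L, T i = s i * Real.log (L / β))
    (v η : ℕ → ℝ)
    (hv : ∀ i ∈ Finset.Icc 1 L, 0 ≤ v i)
    (hη : ∀ i ∈ Finset.Icc 1 L, |η i| ≤ T i)
    (ℓ : ℕ) (hℓmem : ℓ ∈ Finset.Icc 1 L)
    (hℓ : (T ℓ ≤ v ℓ + η ℓ ∧ ∀ i ∈ Finset.Icc 1 L, i < ℓ → v i + η i < T i) ∨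
          (ℓ = L ∧ ∀ i ∈ Finset.Icc 1 L, v i + η i < T i)) :
    |(∑ i ∈ Finset.Icc ℓ L, (v i + η i)) - ∑ i ∈ Finset.Icc 1 L, v i| ≤
      (∑ i ∈ (Finset.Icc 1 (ℓ - 1)).filter (fun i => 0 < v i), 2 * s i * Real.log (L / β)) +
        ∑ i ∈ Finset.Icc ℓ L, s i * Real.log (L / β) := by
  obtain ⟨hℓ1, hℓL⟩ := Finset.mem_Icc.mp hℓmem
  -- pointwise: for i < ℓ, v i + η i < T i
  have hlt : ∀ i ∈ Finset.Icc 1 L, i < ℓ → v i + η i < T i := by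
    rcases hℓ with ⟨_, h⟩ | ⟨_, h⟩
    · exact h
    · exact fun i hi _ => h i hi
  -- sum split
  have hsplit : (∑ i ∈ Finset.Icc 1 L, v i)
      = (∑ i ∈ Finset.Icc 1 (ℓ - 1), v i) + ∑ i ∈ Finset.Icc ℓ L, v i := by
    have h1 : Finset.Icc 1 (ℓ - 1) = Finset.Ico 1 ℓ := by
      rw [← Finset.Ico_add_one_right_eq_Icc]; congr 1; omega
    have h2 : Finset.Icc ℓ L = Finset.Ico ℓ (L + 1) := by
      rw [Finset.Ico_add_one_right_eq_Icc]
    have h3 : Finset.Icc 1 L = Finset.Ico 1 (L + 1) := by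
      rw [Finset.Ico_add_one_right_eq_Icc]
    rw [h1, h2, h3, Finset.sum_Ico_consecutive _ hℓ1 (by omega)]
  have key : (∑ i ∈ Finset.Icc ℓ L, (v i + η i)) - ∑ i ∈ Finset.Icc 1 L, v i
      = (∑ i ∈ Finset.Icc ℓ L, η i) - ∑ i ∈ Finset.Icc 1 (ℓ - 1), v i := by
    rw [hsplit, Finset.sum_add_distrib]; ring
  rw [key]
  have hsub : Finset.Icc ℓ L ⊆ Finset.Icc 1 L := Finset.Icc_subset_Icc hℓ1 le_rfl
  have hsub2 : ∀ i ∈ Finset.Icc 1 (ℓ - 1), i ∈ Finset.Icc 1 L ∧ i < ℓ := by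
    intro i hi
    obtain ⟨h1, h2⟩ := Finset.mem_Icc.mp hi
    exact ⟨Finset.mem_Icc.mpr ⟨h1, by omega⟩, by omega⟩
  have b1 : |∑ i ∈ Finset.Icc ℓ L, η i| ≤ ∑ i ∈ Finset.Icc ℓ L, s i * Real.log (L / β) := by
    refine (Finset.abs_sum_le_sum_abs _ _).trans (Finset.sum_le_sum fun i hi => ?_)
    rw [← hT i (hsub hi)]; exact hη i (hsub hi)
  have b2 : |∑ i ∈ Finset.Icc 1 (ℓ - 1), v i|
      ≤ ∑ i ∈ (Finset.Icc 1 (ℓ - 1)).filter (fun i => 0 < v i), 2 * s i * Real.log (L / β) := by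
    have hvnn : ∀ i ∈ Finset.Icc 1 (ℓ - 1), 0 ≤ v i := fun i hi => hv i (hsub2 i hi).1
    rw [abs_of_nonneg (Finset.sum_nonneg hvnn)]
    have heq : (∑ i ∈ Finset.Icc 1 (ℓ - 1), v i)
        = ∑ i ∈ (Finset.Icc 1 (ℓ - 1)).filter (fun i => 0 < v i), v i := by
      refine (Finset.sum_subset (Finset.filter_subset _ _) ?_).symm
      intro i hi hni
      have := hvnn i hi
      simp only [Finset.mem_filter, not_and, not_lt] at hni
      linarith [hni hi]
    rw [heq]
    refine Finset.sum_le_sum fun i hi => ?_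
    obtain ⟨hi', _⟩ := Finset.mem_filter.mp hi
    obtain ⟨hmem, hiℓ⟩ := hsub2 i hi'
    have h1 := hlt i hmem hiℓ
    have h2 := hη i hmem
    have h3 := hT i hmem
    have : v i ≤ 2 * T i := by
      have := neg_abs_le (η i)
      linarith
    linarith [this, h3.symm ▸ this]
  calc |(∑ i ∈ Finset.Icc ℓ L, η i) - ∑ i ∈ Finset.Icc 1 (ℓ - 1), v i|
      ≤ |∑ i ∈ Finset.Icc ℓ L, η i| + |∑ i ∈ Finset.Icc 1 (ℓ - 1), v i| := abs_sub _ _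
    _ ≤ _ := by linarith
end
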